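/- arXiv:1710.04146 — 4 statements merged into one kernel-verified Lean document; each statement's English description precedes it below -/
import Mathlib

section
/- Let d be a positive integer, let Box ⊆ ℝ^d be a full-dimensional lattice polytope with 0 in its interior, and let e₁,…,e_d denote the standard basis vectors of ℤ^d. Define c(Box) = ∑_{j=1}^{d} 4/α_{e_j}. If f₁,…,fₙ is normalized Fano data on Box, then n ≤ c(Box). -/
open scoped BigOperators

noncomputable section

/-- Embedding of a lattice point of `ℤ^d × ℤ` into `ℝ^d × ℝ`. -/
def latticeEmbed (d : ℕ) (p : (Fin d → ℤ) × ℤ) : (Fin d → ℝ) × ℝ :=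
  (fun i => (p.1 i : ℝ), (p.2 : ℝ))

/-- `Box ⊆ ℝ^d` is a lattice polytope: the convex hull of a finite set of lattice points. -/
def IsLatticePolytope (d : ℕ) (Box : Set (Fin d → ℝ)) : Prop :=
  ∃ S : Finset (Fin d → ℤ),
    Box = convexHull ℝ ((fun v : Fin d → ℤ => fun i => (v i : ℝ)) '' (S : Set (Fin d → ℤ)))

/-- The pairing of `x ∈ ℝ^d` with an integral vector `u ∈ ℤ^d`. -/
def dotZ (d : ℕ) (x : Fin d → ℝ) (u : Fin d → ℤ) : ℝ := ∑ i, x i * (u i : ℝ)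

/-- `f` is an integral concave piecewise-affine function on `Box`: there is a finite set
`S ⊆ ℤ^d × ℤ` such that `Box` is the projection of `conv S` and `f x` is the largest `t`
with `(x, t) ∈ conv S`. -/
def IsICPA (d : ℕ) (Box : Set (Fin d → ℝ)) (f : (Fin d → ℝ) → ℝ) : Prop :=
  ∃ S : Finset ((Fin d → ℤ) × ℤ),
    Prod.fst '' (convexHull ℝ (latticeEmbed d '' (S : Set ((Fin d → ℤ) × ℤ)))) = Box ∧
    ∀ x ∈ Box,
      IsGreatest {t : ℝ | (x, t) ∈ convexHull ℝ (latticeEmbed d '' (S : Set ((Fin d → ℤ) × ℤ)))}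
        (f x)

/-- Every facet of the graph of `f` lies at height one. -/
def AtHeightOne (d : ℕ) (Box : Set (Fin d → ℝ)) (f : (Fin d → ℝ) → ℝ) : Prop :=
  ∀ x ∈ Box, ∃ (u : Fin d → ℤ) (m : ℤ),
    |dotZ d x u + (m : ℝ) * f x| = 1 ∧
    ∀ y ∈ Box, dotZ d y u + (m : ℝ) * f y ≤ dotZ d x u + (m : ℝ) * f x

/-- A combinatorial divisorial polytope (CDP) with base in `ℝ^d`. -/
structure CDP (d : ℕ) where
  box : Set (Fin d → ℝ)
  funcs : List ((Fin d → ℝ) → ℝ)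
  lattice : IsLatticePolytope d box
  fullDim : (interior box).Nonempty
  icpa : ∀ f ∈ funcs, IsICPA d box f
  posSum : ∀ x ∈ interior box, 0 < (funcs.map (fun f => f x)).sum

/-- Two functions agree on a set. -/
def EqOnBox (d : ℕ) (B : Set (Fin d → ℝ)) (f g : (Fin d → ℝ) → ℝ) : Prop :=
  ∀ x ∈ B, f x = g x

/-- Move (i): addition of the zero function. -/
def MoveZero (d : ℕ) (P Q : CDP d) : Prop :=
  Q.box = P.box ∧
    List.Forall₂ (EqOnBox d P.box) Q.funcs (P.funcs ++ [fun _ => (0 : ℝ)])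

/-- Move (ii): permutation of the functions. -/
def MovePerm (d : ℕ) (P Q : CDP d) : Prop :=
  Q.box = P.box ∧ ∃ L, List.Perm L P.funcs ∧ List.Forall₂ (EqOnBox d P.box) Q.funcs L

/-- Move (iii): integral affine transformation of the base. -/
def MoveAffine (d : ℕ) (P Q : CDP d) : Prop :=
  ∃ (A B : Matrix (Fin d) (Fin d) ℤ) (t : Fin d → ℤ),
    A * B = 1 ∧ B * A = 1 ∧
    Q.box = (fun x : Fin d → ℝ => fun i => (∑ j, (A i j : ℝ) * x j) + (t i : ℝ)) '' P.box ∧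
    List.Forall₂ (EqOnBox d Q.box) Q.funcs
      (P.funcs.map (fun f => f ∘ fun x : Fin d → ℝ => fun i => ∑ j, (B i j : ℝ) * (x j - (t j : ℝ))))

/-- Move (iv): translation by integers summing to zero. -/
def MoveTranslate (d : ℕ) (P Q : CDP d) : Prop :=
  Q.box = P.box ∧ ∃ α : List ℤ, α.length = P.funcs.length ∧ α.sum = 0 ∧
    List.Forall₂ (EqOnBox d P.box) Q.funcs
      (List.zipWith (fun f (a : ℤ) => fun x => f x + (a : ℝ)) P.funcs α)

/-- Move (v): shearing by a covector with integral coefficients summing to zero. -/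
def MoveShear (d : ℕ) (P Q : CDP d) : Prop :=
  Q.box = P.box ∧ ∃ (v : Fin d → ℤ) (β : List ℤ), β.length = P.funcs.length ∧ β.sum = 0 ∧
    List.Forall₂ (EqOnBox d P.box) Q.funcs
      (List.zipWith (fun f (b : ℤ) => fun x => f x + (b : ℝ) * dotZ d x v) P.funcs β)

/-- One elementary move between CDPs. -/
def CDPMove (d : ℕ) (P Q : CDP d) : Prop :=
  MoveZero d P Q ∨ MovePerm d P Q ∨ MoveAffine d P Q ∨ MoveTranslate d P Q ∨ MoveShear d P Q

/-- Equivalence of CDPs: the smallest equivalence relation generated by the moves. -/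
def CDPEquiv (d : ℕ) : CDP d → CDP d → Prop := Relation.EqvGen (CDPMove d)

/-- The on-the-nose Fano conditions for a CDP. -/
def IsFanoWitness (d : ℕ) (P : CDP d) : Prop :=
  ∃ a : List ℤ, a.sum = -2 ∧
    (0 : Fin d → ℝ) ∈ interior P.box ∧
    List.Forall₂ (fun f (ai : ℤ) =>
      AtHeightOne d P.box (fun x => f x + (ai : ℝ) + 1) ∧ 0 < f 0 + (ai : ℝ) + 1)
      P.funcs a ∧
    ∀ x ∈ frontier P.box,
      (P.funcs.map (fun f => f x)).sum = 0 ∨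
      ∃ u : Fin d → ℤ, dotZ d x u = 1 ∧ ∀ y ∈ P.box, dotZ d y u ≤ 1

/-- A CDP is Fano if it is equivalent to one satisfying the Fano conditions. -/
def IsFano (d : ℕ) (P : CDP d) : Prop := ∃ Q : CDP d, CDPEquiv d P Q ∧ IsFanoWitness d Q

/-- A CDP is toric if it is equivalent to one with at most two functions. -/
def IsToric (d : ℕ) (P : CDP d) : Prop := ∃ Q : CDP d, CDPEquiv d P Q ∧ Q.funcs.length ≤ 2

/-- `f` agrees on `Box` with an affine function with integral slope and constant. -/
def IsIntegralAffineOn (d : ℕ) (Box : Set (Fin d → ℝ)) (f : (Fin d → ℝ) → ℝ) : Prop :=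
  ∃ (u : Fin d → ℤ) (c : ℤ), ∀ x ∈ Box, f x = dotZ d x u + (c : ℝ)

/-- Normalized Fano data on `Box`: the translated functions `Ψᵢ' = Ψᵢ + aᵢ + 1` of a
normalized Fano CDP. -/
def NormalizedFanoData (d n : ℕ) (Box : Set (Fin d → ℝ))
    (f : Fin n → (Fin d → ℝ) → ℝ) : Prop :=
  (∀ i, IsICPA d Box (f i)) ∧
  (∀ i, AtHeightOne d Box (f i)) ∧
  (∀ i, 0 < f i 0) ∧
  (∀ i, ¬ IsIntegralAffineOn d Box (f i)) ∧
  (∀ x ∈ Box, (n : ℝ) - 2 ≤ ∑ i, f i x) ∧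
  (∀ x ∈ interior Box, (n : ℝ) - 2 < ∑ i, f i x) ∧
  (∀ x ∈ frontier Box,
    (∑ i, f i x) = (n : ℝ) - 2 ∨
    ∃ u : Fin d → ℤ, dotZ d x u = 1 ∧ ∀ y ∈ Box, dotZ d y u ≤ 1)

/-- `α_v = min{1, max{α ≥ 0 : ±αv ∈ Box}}`. -/
def alphaV (d : ℕ) (Box : Set (Fin d → ℝ)) (v : Fin d → ℤ) : ℝ :=
  min 1 (sSup {α : ℝ | 0 ≤ α ∧ (fun i => α * (v i : ℝ)) ∈ Box ∧
    (fun i => -(α * (v i : ℝ))) ∈ Box})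

/-- A primitive integral vector: the gcd of its coordinates is 1. -/
def IsPrimitive (d : ℕ) (v : Fin d → ℤ) : Prop := Finset.univ.gcd v = 1

/-- `f` restricted to `Box ∩ ℝ·v` is affine. -/
def AffineOnLine (d : ℕ) (Box : Set (Fin d → ℝ)) (v : Fin d → ℤ)
    (f : (Fin d → ℝ) → ℝ) : Prop :=
  ∃ s c : ℝ, ∀ t : ℝ, (fun i => t * (v i : ℝ)) ∈ Box →
    f (fun i => t * (v i : ℝ)) = s * t + c

/-- The interval `[a,b]` as a subset of `ℝ¹ = (Fin 1 → ℝ)`. -/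
def intervalBox (a b : ℤ) : Set (Fin 1 → ℝ) := {p : Fin 1 → ℝ | (a : ℝ) ≤ p 0 ∧ p 0 ≤ (b : ℝ)}

/-- The `d`-dimensional cross polytope `conv{±e₁, …, ±e_d}`. -/
def crossPolytope (d : ℕ) : Set (Fin d → ℝ) :=
  convexHull ℝ {x : Fin d → ℝ | ∃ j : Fin d, x = Pi.single j 1 ∨ x = -Pi.single j 1}

/-! ### Auxiliary material for the proof -/

section Aux

variable {d : ℕ}

/-- The point `t·e_j ∈ ℝ^d`. -/
def ptAx (d : ℕ) (j : Fin d) (t : ℝ) : Fin d → ℝ :=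
  fun i => t * (((Pi.single j 1 : Fin d → ℤ) i : ℤ) : ℝ)

lemma dotZ_combo (a b : ℝ) (x y : Fin d → ℝ) (u : Fin d → ℤ) :
    dotZ d (fun i => a * x i + b * y i) u = a * dotZ d x u + b * dotZ d y u := by
  simp only [dotZ, Finset.mul_sum]
  rw [← Finset.sum_add_distrib]
  exact Finset.sum_congr rfl fun i _ => by ring

lemma dotZ_zero_left (u : Fin d → ℤ) : dotZ d (0 : Fin d → ℝ) u = 0 := by
  simp [dotZ]

lemma dotZ_ptAx (j : Fin d) (t : ℝ) (u : Fin d → ℤ) :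
    dotZ d (ptAx d j t) u = t * (u j : ℝ) := by
  unfold dotZ ptAx
  rw [Finset.sum_eq_single j]
  · simp
  · intro i _ hij
    simp [Pi.single_eq_of_ne hij]
  · simp

lemma dotZ_neg_right (x : Fin d → ℝ) (u : Fin d → ℤ) :
    dotZ d x (fun i => -(u i)) = -dotZ d x u := by
  simp only [dotZ, ← Finset.sum_neg_distrib]
  exact Finset.sum_congr rfl fun i _ => by push_cast; ring

/-- Concavity of an ICPA function, in explicit form. -/
lemma icpa_concave {Box : Set (Fin d → ℝ)} {f : (Fin d → ℝ) → ℝ}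
    (h : IsICPA d Box f) :
    ∀ x ∈ Box, ∀ y ∈ Box, ∀ a b : ℝ, 0 ≤ a → 0 ≤ b → a + b = 1 →
      a * f x + b * f y ≤ f (fun i => a * x i + b * y i) := by
  obtain ⟨S, hfst, hgr⟩ := h
  intro x hx y hy a b ha hb hab
  set K := convexHull ℝ (latticeEmbed d '' (S : Set ((Fin d → ℤ) × ℤ))) with hK
  have hKconv : Convex ℝ K := convex_convexHull ℝ _
  have hxK : ((x, f x) : (Fin d → ℝ) × ℝ) ∈ K := (hgr x hx).1
  have hyK : ((y, f y) : (Fin d → ℝ) × ℝ) ∈ K := (hgr y hy).1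
  have hcomb := hKconv hxK hyK ha hb hab
  have hpt : a • ((x, f x) : (Fin d → ℝ) × ℝ) + b • ((y, f y) : (Fin d → ℝ) × ℝ)
      = ((fun i => a * x i + b * y i), a * f x + b * f y) := by
    refine Prod.ext ?_ ?_
    · funext i
      simp [smul_eq_mul]
    · simp [smul_eq_mul]
  rw [hpt] at hcomb
  have hzBox : (fun i => a * x i + b * y i) ∈ Box := by
    rw [← hfst]
    exact ⟨_, hcomb, rfl⟩
  exact (hgr _ hzBox).2 hcomb

/-- Height-one data at an interior point: the vertical coefficient `m` is either
positive, or the functional is constant on `Box`. -/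
lemma height_one_interior {Box : Set (Fin d → ℝ)} {f : (Fin d → ℝ) → ℝ}
    (hconc : ∀ x ∈ Box, ∀ y ∈ Box, ∀ a b : ℝ, 0 ≤ a → 0 ≤ b → a + b = 1 →
      a * f x + b * f y ≤ f (fun i => a * x i + b * y i))
    (hh1 : AtHeightOne d Box f) {x : Fin d → ℝ} (hx : x ∈ interior Box) :
    ∃ (u : Fin d → ℤ) (m : ℤ) (M : ℝ), (M = 1 ∨ M = -1) ∧
      dotZ d x u + (m : ℝ) * f x = M ∧ (∀ y ∈ Box, dotZ d y u + (m : ℝ) * f y ≤ M) ∧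
      (1 ≤ m ∨ (m ≤ -1 ∧ ∀ y ∈ Box, dotZ d y u + (m : ℝ) * f y = M)) := by
  obtain ⟨u, m, habs, hle⟩ := hh1 x (interior_subset hx)
  set M : ℝ := dotZ d x u + (m : ℝ) * f x with hMdef
  have hM : M = 1 ∨ M = -1 := (abs_eq (by norm_num : (0:ℝ) ≤ 1)).1 habs
  by_cases hm : 1 ≤ m
  · exact ⟨u, m, M, hM, rfl, hle, Or.inl hm⟩
  · have hm0 : m ≤ 0 := by omega
    have hm0R : (m : ℝ) ≤ 0 := by exact_mod_cast hm0
    obtain ⟨ε, hε, hball⟩ := Metric.mem_nhds_iff.1 (mem_interior_iff_mem_nhds.1 hx)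
    -- constancy of the functional on Box
    have hconst : ∀ y ∈ Box, dotZ d y u + (m : ℝ) * f y = M := by
      intro y hy
      rcases eq_or_ne x y with rfl | hne
      · exact hMdef.symm
      · have hD : 0 < dist x y := dist_pos.2 hne
        set t : ℝ := ε / (2 * dist x y) with htdef
        have ht : 0 < t := div_pos hε (by positivity)
        set z : Fin d → ℝ := fun i => x i + t * (x i - y i) with hzdef
        have hz : z ∈ Box := by
          apply hball
          rw [Metric.mem_ball, dist_pi_lt_iff hε]
          intro i
          have h1 : dist (z i) (x i) = t * |x i - y i| := by
            rw [Real.dist_eq]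
            simp only [hzdef]
            rw [show x i + t * (x i - y i) - x i = t * (x i - y i) by ring,
              abs_mul, abs_of_pos ht]
          have h2 : |x i - y i| ≤ dist x y := by
            rw [← Real.dist_eq]
            exact dist_le_pi_dist x y i
          have h3 : t * |x i - y i| ≤ t * dist x y :=
            mul_le_mul_of_nonneg_left h2 ht.le
          have h4 : t * dist x y = ε / 2 := by
            rw [htdef]; field_simp
          rw [h1]; linarith
        have h1t : (0:ℝ) < 1 + t := by linarith
        set a : ℝ := 1/(1+t) with hadef
        set b : ℝ := t/(1+t) with hbdef
        have ha : 0 ≤ a := by positivity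
        have hb : 0 < b := by positivity
        have hab : a + b = 1 := by rw [hadef, hbdef]; field_simp
        have hxeq : (fun i => a * z i + b * y i) = x := by
          funext i
          simp only [hzdef, hadef, hbdef]
          field_simp
          ring
        have hfx : a * f z + b * f y ≤ f x := by
          have := hconc z hz y hy a b ha hb.le hab
          rwa [hxeq] at this
        have hdot : dotZ d x u = a * dotZ d z u + b * dotZ d y u := by
          have := dotZ_combo a b z y u
          rwa [hxeq] at this
        have hgz := hle z hz
        have hgy := hle y hy
        have hmul : (m:ℝ) * f x ≤ (m:ℝ) * (a * f z + b * f y) :=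
          mul_le_mul_of_nonpos_left hfx hm0R
        have hrng : a * (dotZ d z u + (m:ℝ) * f z) + b * (dotZ d y u + (m:ℝ) * f y)
            = (a * dotZ d z u + b * dotZ d y u) + (m:ℝ) * (a * f z + b * f y) := by ring
        have hMle : M ≤ a * (dotZ d z u + (m:ℝ) * f z) + b * (dotZ d y u + (m:ℝ) * f y) := by
          rw [hrng, hMdef, hdot]; linarith
        have haz : a * (dotZ d z u + (m:ℝ) * f z) ≤ a * M :=
          mul_le_mul_of_nonneg_left hgz ha
        have hstep : M ≤ a * M + b * (dotZ d y u + (m:ℝ) * f y) := by linarith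
        have hbM : b * M ≤ b * (dotZ d y u + (m:ℝ) * f y) := by
          have hba : b = 1 - a := by linarith
          rw [hba] at hstep ⊢
          nlinarith [hstep]
        have hge : M ≤ dotZ d y u + (m:ℝ) * f y := le_of_mul_le_mul_left hbM hb
        exact le_antisymm (hle y hy) hge
    rcases eq_or_lt_of_le hm0 with hm00 | hmneg
    · -- m = 0 : impossible
      exfalso
      have hmz : (m:ℝ) = 0 := by rw [hm00]; norm_num
      have hu0 : ∀ i, (u i : ℝ) = 0 := by
        intro i
        set w : Fin d → ℝ := fun k => 1 * x k + (ε/2) * (ptAx d i 1) k with hwdef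
        have hwBox : w ∈ Box := by
          apply hball
          rw [Metric.mem_ball, dist_pi_lt_iff hε]
          intro k
          have h1 : dist (w k) (x k) = (ε/2) * |(ptAx d i 1) k| := by
            rw [Real.dist_eq]
            simp only [hwdef]
            rw [show 1 * x k + ε/2 * (ptAx d i 1) k - x k = (ε/2) * (ptAx d i 1) k by ring,
              abs_mul, abs_of_pos (by linarith : (0:ℝ) < ε/2)]
          have h2 : |(ptAx d i 1) k| ≤ 1 := by
            unfold ptAx
            rcases eq_or_ne k i with rfl | hki
            · simp
            · simp [Pi.single_eq_of_ne hki]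
          rw [h1]
          nlinarith
        have hcw := hconst w hwBox
        have hcx := hconst x (interior_subset hx)
        rw [hmz, zero_mul, add_zero] at hcw hcx
        have hdw : dotZ d w u = dotZ d x u + (ε/2) * ((u i : ℝ)) := by
          have h := dotZ_combo 1 (ε/2) x (ptAx d i 1) u
          have h2 : dotZ d (ptAx d i 1) u = 1 * (u i : ℝ) := dotZ_ptAx i 1 u
          rw [h2] at h
          simpa [hwdef] using h
        rw [hcw, hcx] at hdw
        have : (ε/2) * (u i : ℝ) = 0 := by linarith
        rcases mul_eq_zero.1 this with h | h
        · linarith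
        · exact h
      have hdx : dotZ d x u = 0 := by
        unfold dotZ
        exact Finset.sum_eq_zero fun i _ => by rw [hu0 i, mul_zero]
      rw [hMdef, hmz, zero_mul, add_zero, hdx] at hM
      norm_num at hM
    · exact ⟨u, m, M, hM, rfl, hle, Or.inr ⟨by omega, hconst⟩⟩

/-- The value of a normalized-Fano function at the origin is `1` or at most `1/2`. -/
lemma f_zero_dichotomy {Box : Set (Fin d → ℝ)} {f : (Fin d → ℝ) → ℝ}
    (hconc : ∀ x ∈ Box, ∀ y ∈ Box, ∀ a b : ℝ, 0 ≤ a → 0 ≤ b → a + b = 1 →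
      a * f x + b * f y ≤ f (fun i => a * x i + b * y i))
    (hh1 : AtHeightOne d Box f) (hna : ¬ IsIntegralAffineOn d Box f)
    (h0 : (0 : Fin d → ℝ) ∈ interior Box) (hf0 : 0 < f 0) :
    f 0 = 1 ∨ f 0 ≤ 1/2 := by
  obtain ⟨u, m, M, hM, heq, hle, hcase⟩ := height_one_interior hconc hh1 h0
  rw [dotZ_zero_left, zero_add] at heq
  rcases hcase with hm | ⟨hm, hconst⟩
  · -- m ≥ 1, M = m * f 0 > 0 so M = 1, f 0 = 1/m
    have hmR : (1:ℝ) ≤ (m:ℝ) := by exact_mod_cast hm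
    have hMpos : 0 < M := by rw [← heq]; positivity
    have hM1 : M = 1 := by
      rcases hM with h | h
      · exact h
      · exfalso; rw [h] at hMpos; linarith
    rw [hM1] at heq
    rcases eq_or_lt_of_le hm with h1 | h2
    · left
      rw [← h1] at heq
      push_cast at heq
      linarith
    · right
      have h2R : (2:ℝ) ≤ (m:ℝ) := by exact_mod_cast (by omega : (2:ℤ) ≤ m)
      nlinarith
  · -- constant case: f is affine
    have hmR : (m:ℝ) ≤ -1 := by exact_mod_cast hm
    have hMneg : M < 0 := by
      rw [← heq]; nlinarith
    have hM1 : M = -1 := by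
      rcases hM with h | h
      · exfalso; rw [h] at hMneg; linarith
      · exact h
    rcases eq_or_lt_of_le hm with h1 | h2
    · exfalso
      apply hna
      refine ⟨u, 1, fun y hy => ?_⟩
      have hcy := hconst y hy
      rw [hM1, h1] at hcy
      push_cast at hcy ⊢
      linarith
    · right
      have h2R : (m:ℝ) ≤ -2 := by exact_mod_cast (by omega : m ≤ (-2:ℤ))
      rw [hM1] at heq
      nlinarith

/-- The key drop lemma: a non-affine normalized-Fano function with `f 0 = 1`
drops by at least `α j` along some coordinate axis. -/
lemma crux_drop {Box : Set (Fin d → ℝ)} {f : (Fin d → ℝ) → ℝ}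
    (hBoxconv : Convex ℝ Box)
    (hicpa : IsICPA d Box f) (hh1 : AtHeightOne d Box f)
    (hna : ¬ IsIntegralAffineOn d Box f)
    (h0 : (0 : Fin d → ℝ) ∈ interior Box) (hf0 : f 0 = 1)
    {α : Fin d → ℝ} (hαpos : ∀ j, 0 < α j)
    (hmemp : ∀ j, ptAx d j (α j) ∈ Box) (hmemq : ∀ j, ptAx d j (-(α j)) ∈ Box) :
    ∃ j, f (ptAx d j (α j)) + f (ptAx d j (-(α j))) ≤ 2 - α j := by
  by_contra hcon
  push_neg at hcon
  have hconc := icpa_concave hicpa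
  have h0Box : (0 : Fin d → ℝ) ∈ Box := interior_subset h0
  -- Step B: interior functionals with m = 1, M = 1
  have hfun : ∀ x ∈ interior Box,
      ∃ u : Fin d → ℤ, dotZ d x u + f x = 1 ∧ ∀ y ∈ Box, dotZ d y u + f y ≤ 1 := by
    intro x hx
    obtain ⟨u, m, M, hM, heq, hle, hcase⟩ := height_one_interior hconc hh1 hx
    have h0val : (m : ℝ) * 1 = (m : ℝ) := mul_one _
    rcases hcase with hm | ⟨hm, hconst⟩
    · have hle0 := hle 0 h0Box
      rw [dotZ_zero_left, zero_add, hf0, mul_one] at hle0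
      have hmR : (1:ℝ) ≤ (m:ℝ) := by exact_mod_cast hm
      have hM1 : M = 1 := by
        rcases hM with h | h
        · exact h
        · exfalso; rw [h] at hle0; linarith
      have hm1 : (m:ℝ) = 1 := by
        rw [hM1] at hle0; linarith
      simp only [hm1, one_mul] at heq hle
      refine ⟨u, by rw [heq, hM1], fun y hy => ?_⟩
      rw [← hM1]
      exact hle y hy
    · exfalso
      have hc0 := hconst 0 h0Box
      rw [dotZ_zero_left, zero_add, hf0, mul_one] at hc0
      have hmR : (m:ℝ) ≤ -1 := by exact_mod_cast hm
      have hM1 : M = -1 := by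
        rcases hM with h | h
        · exfalso; rw [h] at hc0; linarith
        · exact h
      have hm1 : m = -1 := by
        have : (m:ℝ) = -1 := by rw [hM1] at hc0; exact hc0
        exact_mod_cast this
      apply hna
      refine ⟨u, 1, fun y hy => ?_⟩
      have hcy2 := hconst y hy
      rw [hM1, hm1] at hcy2
      push_cast at hcy2 ⊢
      linarith
  -- interior membership of half-way points
  have hmempβ : ∀ j, ptAx d j (α j / 2) ∈ interior Box := by
    intro j
    have := hBoxconv.combo_interior_self_mem_interior h0 (hmemp j)
      (by norm_num : (0:ℝ) < 1/2) (by norm_num : (0:ℝ) ≤ 1/2) (by norm_num)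
    convert this using 1
    funext i
    simp only [Pi.add_apply, Pi.smul_apply, Pi.zero_apply, smul_eq_mul, ptAx]
    ring
  have hmemqβ : ∀ j, ptAx d j (-(α j / 2)) ∈ interior Box := by
    intro j
    have := hBoxconv.combo_interior_self_mem_interior h0 (hmemq j)
      (by norm_num : (0:ℝ) < 1/2) (by norm_num : (0:ℝ) ≤ 1/2) (by norm_num)
    convert this using 1
    funext i
    simp only [Pi.add_apply, Pi.smul_apply, Pi.zero_apply, smul_eq_mul, ptAx]
    ring
  -- Step A: strict no-drop at the half-way points
  have hA : ∀ j, 2 - α j / 2 < f (ptAx d j (α j / 2)) + f (ptAx d j (-(α j / 2))) := by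
    intro j
    have h1 : 1/2 * f 0 + 1/2 * f (ptAx d j (α j)) ≤ f (ptAx d j (α j / 2)) := by
      have := hconc 0 h0Box (ptAx d j (α j)) (hmemp j) (1/2) (1/2)
        (by norm_num) (by norm_num) (by norm_num)
      convert this using 2
      funext i
      simp only [Pi.zero_apply, ptAx]
      ring
    have h2 : 1/2 * f 0 + 1/2 * f (ptAx d j (-(α j))) ≤ f (ptAx d j (-(α j / 2))) := by
      have := hconc 0 h0Box (ptAx d j (-(α j))) (hmemq j) (1/2) (1/2)
        (by norm_num) (by norm_num) (by norm_num)
      convert this using 2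
      funext i
      simp only [Pi.zero_apply, ptAx]
      ring
    have h3 := hcon j
    rw [hf0] at h1 h2
    linarith
  -- Step C: determine f on the half-way points
  have hC : ∀ j, ∃ k : ℤ, f (ptAx d j (α j / 2)) = 1 - (α j / 2) * k ∧
      f (ptAx d j (-(α j / 2))) = 1 + (α j / 2) * k := by
    intro j
    obtain ⟨u, hu1, hu2⟩ := hfun _ (hmempβ j)
    obtain ⟨v, hv1, hv2⟩ := hfun _ (hmemqβ j)
    rw [dotZ_ptAx] at hu1 hv1
    have hβ : 0 < α j / 2 := by linarith [hαpos j]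
    have hfp : f (ptAx d j (α j / 2)) = 1 - α j / 2 * (u j : ℝ) := by linarith
    have hfq : f (ptAx d j (-(α j / 2))) = 1 + α j / 2 * (v j : ℝ) := by
      have h := hv1
      have h2 : -(α j / 2) * (v j : ℝ) = -(α j / 2 * (v j : ℝ)) := by ring
      rw [h2] at h
      linarith
    have huv1 : v j ≤ u j := by
      have h := hu2 _ (interior_subset (hmemqβ j))
      rw [dotZ_ptAx, hfq] at h
      have h2 : (v j : ℝ) ≤ u j := by
        by_contra hlt
        push_neg at hlt
        have h3 := mul_pos hβ (sub_pos.2 hlt)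
        nlinarith
      exact_mod_cast h2
    have huv2 : u j ≤ v j := by
      have h3 := hA j
      rw [hfp, hfq] at h3
      have h5 : (u j : ℝ) - v j < 1 := by
        by_contra hlt
        push_neg at hlt
        have h4 := mul_le_mul_of_nonneg_left hlt hβ.le
        nlinarith
      have h7 : (u j : ℝ) < v j + 1 := by linarith
      have h8 : u j < v j + 1 := by exact_mod_cast h7
      omega
    have huv : (v j : ℝ) = (u j : ℝ) := by
      have h9 : v j = u j := le_antisymm huv1 huv2
      exact_mod_cast h9
    exact ⟨u j, hfp, by rw [hfq, huv]⟩
  choose k hk1 hk2 using hC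
  -- Step D: every interior functional equals `k`
  have hD : ∀ x ∈ interior Box, (∀ y ∈ Box, dotZ d y k + f y ≤ 1) ∧ f x = 1 - dotZ d x k := by
    intro x hx
    obtain ⟨u, hu1, hu2⟩ := hfun x hx
    have huk : u = k := by
      funext j
      have hβ : 0 < α j / 2 := by linarith [hαpos j]
      have hp := hu2 _ (interior_subset (hmempβ j))
      have hq := hu2 _ (interior_subset (hmemqβ j))
      rw [dotZ_ptAx, hk1 j] at hp
      rw [dotZ_ptAx, hk2 j] at hq
      have hq' : -(α j / 2 * (u j : ℝ)) + (1 + α j / 2 * (k j : ℝ)) ≤ 1 := by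
        have h2 : -(α j / 2) * (u j : ℝ) = -(α j / 2 * (u j : ℝ)) := by ring
        rw [h2] at hq
        exact hq
      have h1 : (u j : ℝ) ≤ k j := by
        by_contra h
        push_neg at h
        have h3 := mul_pos hβ (sub_pos.2 h)
        nlinarith
      have h2 : (k j : ℝ) ≤ u j := by
        by_contra h
        push_neg at h
        have h3 := mul_pos hβ (sub_pos.2 h)
        nlinarith
      exact_mod_cast le_antisymm h1 h2
    rw [huk] at hu1 hu2
    exact ⟨hu2, by linarith⟩
  have hglob : ∀ y ∈ Box, dotZ d y k + f y ≤ 1 := (hD 0 h0).1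
  -- Step E: f is integral affine on all of Box, contradiction
  apply hna
  refine ⟨fun i => -(k i), 1, fun x hx => ?_⟩
  rw [dotZ_neg_right]
  have hup : f x ≤ 1 - dotZ d x k := by
    have := hglob x hx
    linarith
  have hlow : 1 - dotZ d x k ≤ f x := by
    obtain ⟨S, hfst, hgr⟩ := hicpa
    set K := convexHull ℝ (latticeEmbed d '' (S : Set ((Fin d → ℤ) × ℤ))) with hKdef
    have hKclosed : IsClosed K := ((S.finite_toSet).image (latticeEmbed d)).isClosed_convexHull ℝ
    set c : ℕ → ℝ := fun n => 1 - 1/(n+1) with hcdef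
    have hc01 : ∀ n : ℕ, 0 < 1/((n:ℝ)+1) ∧ 0 ≤ c n := by
      intro n
      have h1 : (0:ℝ) < (n:ℝ)+1 := by positivity
      constructor
      · positivity
      · rw [hcdef]
        simp only
        rw [sub_nonneg, div_le_one h1]
        linarith
    have hcmem : ∀ n : ℕ, (fun i => c n * x i) ∈ interior Box := by
      intro n
      have h := hBoxconv.combo_interior_self_mem_interior h0 hx (hc01 n).1 (hc01 n).2
        (by rw [hcdef]; ring)
      convert h using 1
      funext i
      simp only [Pi.add_apply, Pi.smul_apply, Pi.zero_apply, smul_eq_mul]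
      ring
    have hmemK : ∀ n : ℕ,
        (((fun i => c n * x i), 1 - c n * dotZ d x k) : (Fin d → ℝ) × ℝ) ∈ K := by
      intro n
      have hfx := (hD _ (hcmem n)).2
      have hdc : dotZ d (fun i => c n * x i) k = c n * dotZ d x k := by
        have h := dotZ_combo (c n) 0 x x k
        simpa using h
      have hmm := (hgr _ (interior_subset (hcmem n))).1
      have : f (fun i => c n * x i) = 1 - c n * dotZ d x k := by rw [hfx, hdc]
      rw [← this]
      exact hmm
    have htend : Filter.Tendsto
        (fun n : ℕ => (((fun i => c n * x i), 1 - c n * dotZ d x k) : (Fin d → ℝ) × ℝ))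
        Filter.atTop (nhds (x, 1 - dotZ d x k)) := by
      have hc1 : Filter.Tendsto c Filter.atTop (nhds 1) := by
        rw [hcdef]
        have h0' := tendsto_one_div_add_atTop_nhds_zero_nat (𝕜 := ℝ)
        have h1' : Filter.Tendsto (fun n : ℕ => 1 - 1/((n:ℝ)+1)) Filter.atTop (nhds (1 - 0)) :=
          (tendsto_const_nhds : Filter.Tendsto (fun _ : ℕ => (1:ℝ)) Filter.atTop (nhds 1)).sub h0'
        simpa using h1'
      refine Filter.Tendsto.prodMk_nhds ?_ ?_
      · rw [tendsto_pi_nhds]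
        intro i
        have h2' : Filter.Tendsto (fun n => c n * x i) Filter.atTop (nhds (1 * x i)) :=
          hc1.mul tendsto_const_nhds
        simpa using h2'
      · have h2' : Filter.Tendsto (fun n => 1 - c n * dotZ d x k) Filter.atTop
            (nhds (1 - 1 * dotZ d x k)) :=
          tendsto_const_nhds.sub (hc1.mul tendsto_const_nhds)
        simpa using h2'
    have hmem := hKclosed.mem_of_tendsto htend (Filter.Eventually.of_forall hmemK)
    exact (hgr x hx).2 hmem
  push_cast
  linarith

end Aux

/-- Any normalized Fano data on `Box` has at most `c(Box) = ∑_j 4/α_{e_j}` functions. -/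
theorem normalized_fano_data_le_cBox
    (d : ℕ) (hd : 0 < d) (Box : Set (Fin d → ℝ)) (hlat : IsLatticePolytope d Box)
    (h0 : (0 : Fin d → ℝ) ∈ interior Box)
    (n : ℕ) (f : Fin n → (Fin d → ℝ) → ℝ)
    (hf : NormalizedFanoData d n Box f) :
    (n : ℝ) ≤ ∑ j : Fin d, 4 / alphaV d Box (Pi.single j 1) := by
  classical
  obtain ⟨hicpa, hh1, hpos, hnaff, hsum, hsumInt, hfront⟩ := hf
  obtain ⟨SB, hSB⟩ := hlat
  have hBoxconv : Convex ℝ Box := hSB ▸ convex_convexHull ℝ _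
  have hBoxcompact : IsCompact Box := by
    rw [hSB]
    exact (SB.finite_toSet.image _).isCompact_convexHull ℝ
  have hBoxclosed : IsClosed Box := hBoxcompact.isClosed
  have h0Box : (0 : Fin d → ℝ) ∈ Box := interior_subset h0
  set α : Fin d → ℝ := fun j => alphaV d Box (Pi.single j 1) with hαdef
  have halpha : ∀ j, 0 < α j ∧ α j ≤ 1 ∧ ptAx d j (α j) ∈ Box ∧ ptAx d j (-(α j)) ∈ Box := by
    intro j
    set v : Fin d → ℤ := Pi.single j 1 with hv
    set T : Set ℝ := {a : ℝ | 0 ≤ a ∧ (fun i => a * (v i : ℝ)) ∈ Box ∧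
        (fun i => -(a * (v i : ℝ))) ∈ Box} with hT
    have hptp : ∀ a : ℝ, (fun i => a * (v i : ℝ)) = ptAx d j a := by
      intro a; funext i; simp [ptAx, hv]
    have hptq : ∀ a : ℝ, (fun i => -(a * (v i : ℝ))) = ptAx d j (-a) := by
      intro a; funext i; simp [ptAx, hv]
    have h0T : (0:ℝ) ∈ T := by
      refine ⟨le_refl 0, ?_, ?_⟩ <;>
      · convert h0Box using 1
        funext i
        simp
    have hseg : ∀ a ∈ T, ∀ c : ℝ, 0 ≤ c → c ≤ a → c ∈ T := by
      intro a ha c hc hca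
      rcases eq_or_lt_of_le (hc.trans hca) with h0a | h0a
      · have hc0 : c = 0 := le_antisymm (h0a ▸ hca) hc
        rw [hc0]; exact h0T
      · have hane : a ≠ 0 := ne_of_gt h0a
        have ht0 : 0 ≤ c / a := div_nonneg hc h0a.le
        have ht1 : c / a ≤ 1 := div_le_one_of_le₀ hca h0a.le
        have key : ∀ w : Fin d → ℝ, w ∈ Box → (fun i => (c/a) * w i) ∈ Box := by
          intro w hw
          have h := hBoxconv hw h0Box (a := c/a) (b := 1 - c/a) ht0 (by linarith) (by ring)
          convert h using 1
          funext i
          simp only [Pi.add_apply, Pi.smul_apply, Pi.zero_apply, smul_eq_mul]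
          ring
        refine ⟨hc, ?_, ?_⟩
        · have h2 := key _ ha.2.1
          have h3 : (fun i => (c/a) * (a * (v i:ℝ))) = (fun i => c * (v i : ℝ)) := by
            funext i; field_simp
          rwa [h3] at h2
        · have h2 := key _ ha.2.2
          have h3 : (fun i => (c/a) * (-(a * (v i:ℝ)))) = (fun i => -(c * (v i : ℝ))) := by
            funext i; field_simp
          rwa [h3] at h2
    obtain ⟨R, hR⟩ := hBoxcompact.isBounded.subset_closedBall 0
    have hTbdd : T ⊆ Set.Icc 0 R := by
      intro a ha
      refine ⟨ha.1, ?_⟩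
      have h1 := hR ha.2.1
      rw [Metric.mem_closedBall] at h1
      have h2 := dist_le_pi_dist (fun i => a * ((v i:ℤ):ℝ)) (0 : Fin d → ℝ) j
      have h3 : dist ((fun i => a * ((v i:ℤ):ℝ)) j) ((0 : Fin d → ℝ) j) = a := by
        rw [Real.dist_eq]
        simp [hv, abs_of_nonneg ha.1]
      rw [h3] at h2
      exact h2.trans h1
    have hTclosed : IsClosed T := by
      rw [hT, Set.setOf_and, Set.setOf_and]
      have hcont : ∀ s : ℝ, Continuous (fun a : ℝ => (fun i => s * (a * ((v i:ℤ):ℝ)))) := by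
        intro s
        exact continuous_pi fun i => (continuous_const.mul (continuous_id.mul continuous_const))
      refine (isClosed_le continuous_const continuous_id).inter (IsClosed.inter ?_ ?_)
      · exact hBoxclosed.preimage (continuous_pi fun i => continuous_id.mul continuous_const)
      · exact hBoxclosed.preimage
          (continuous_pi fun i => (continuous_id.mul continuous_const).neg)
    have hTcompact : IsCompact T := isCompact_Icc.of_isClosed_subset hTclosed hTbdd
    obtain ⟨ε, hε, hball⟩ := Metric.mem_nhds_iff.1 (mem_interior_iff_mem_nhds.1 h0)
    have hhalf : ε/2 ∈ T := by
      have hmem : ∀ w : Fin d → ℝ, (∀ i, dist (w i) 0 ≤ ε/2) → w ∈ Box := by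
        intro w hw
        apply hball
        rw [Metric.mem_ball, dist_pi_lt_iff hε]
        intro b
        calc dist (w b) ((0 : Fin d → ℝ) b) = dist (w b) 0 := by rw [Pi.zero_apply]
          _ ≤ ε/2 := hw b
          _ < ε := by linarith
      refine ⟨by linarith, hmem _ ?_, hmem _ ?_⟩
      · intro i
        rw [Real.dist_eq, sub_zero]
        rcases eq_or_ne i j with rfl | hij
        · have h1 : ((v i : ℤ):ℝ) = 1 := by simp [hv]
          rw [h1, mul_one, abs_of_nonneg (by linarith : (0:ℝ) ≤ ε/2)]
        · have h1 : ((v i : ℤ):ℝ) = 0 := by simp [hv, Pi.single_eq_of_ne hij]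
          rw [h1, mul_zero, abs_zero]
          linarith
      · intro i
        rw [Real.dist_eq, sub_zero, abs_neg]
        rcases eq_or_ne i j with rfl | hij
        · have h1 : ((v i : ℤ):ℝ) = 1 := by simp [hv]
          rw [h1, mul_one, abs_of_nonneg (by linarith : (0:ℝ) ≤ ε/2)]
        · have h1 : ((v i : ℤ):ℝ) = 0 := by simp [hv, Pi.single_eq_of_ne hij]
          rw [h1, mul_zero, abs_zero]
          linarith
    have hsupT : sSup T ∈ T := hTcompact.sSup_mem ⟨0, h0T⟩
    have hsup_ge : ε/2 ≤ sSup T := le_csSup hTcompact.bddAbove hhalf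
    have hαeq : α j = min 1 (sSup T) := by
      rw [hαdef]
      simp only [alphaV, hT, hv]
    have hmin_nonneg : 0 ≤ min 1 (sSup T) :=
      le_min (by norm_num) (le_csSup hTcompact.bddAbove h0T)
    have hminT : min 1 (sSup T) ∈ T := hseg _ hsupT _ hmin_nonneg (min_le_right _ _)
    refine ⟨?_, ?_, ?_, ?_⟩
    · rw [hαeq]; exact lt_min one_pos (by linarith)
    · rw [hαeq]; exact min_le_left _ _
    · rw [hαeq, ← hptp]; exact hminT.2.1
    · rw [hαeq, ← hptq]; exact hminT.2.2
  have hconc : ∀ i, ∀ x ∈ Box, ∀ y ∈ Box, ∀ a b : ℝ, 0 ≤ a → 0 ≤ b → a + b = 1 →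
      a * f i x + b * f i y ≤ f i (fun s => a * x s + b * y s) := fun i => icpa_concave (hicpa i)
  have hdich : ∀ i, f i 0 = 1 ∨ f i 0 ≤ 1/2 := fun i =>
    f_zero_dichotomy (hconc i) (hh1 i) (hnaff i) h0 (hpos i)
  have hαpos : ∀ j, 0 < α j := fun j => (halpha j).1
  have hα1 : ∀ j, α j ≤ 1 := fun j => (halpha j).2.1
  have hmemp : ∀ j, ptAx d j (α j) ∈ Box := fun j => (halpha j).2.2.1
  have hmemq : ∀ j, ptAx d j (-(α j)) ∈ Box := fun j => (halpha j).2.2.2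
  have hdrop : ∀ i, f i 0 = 1 → ∃ j, f i (ptAx d j (α j)) + f i (ptAx d j (-(α j))) ≤ 2 - α j :=
    fun i hi => crux_drop hBoxconv (hicpa i) (hh1 i) (hnaff i) h0 hi hαpos hmemp hmemq
  have hδ : ∀ i j, f i (ptAx d j (α j)) + f i (ptAx d j (-(α j))) ≤ 2 * f i 0 := by
    intro i j
    have h := hconc i _ (hmemp j) _ (hmemq j) (1/2) (1/2) (by norm_num) (by norm_num) (by norm_num)
    have heq : (fun s => 1/2 * ptAx d j (α j) s + 1/2 * ptAx d j (-(α j)) s)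
        = (0 : Fin d → ℝ) := by
      funext s
      simp only [ptAx, Pi.zero_apply]
      ring
    rw [heq] at h
    linarith
  have hle1 : ∀ i, f i 0 ≤ 1 := by
    intro i
    rcases hdich i with h | h
    · rw [h]
    · linarith
  have hgnonneg : ∀ j i, 0 ≤ 1 - (f i (ptAx d j (α j)) + f i (ptAx d j (-(α j)))) / 2 := by
    intro j i
    have h1 := hδ i j
    have h2 := hle1 i
    linarith
  have hkey : ∀ j, ∑ i, (1 - (f i (ptAx d j (α j)) + f i (ptAx d j (-(α j)))) / 2) ≤ 2 := by
    intro j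
    have h1 := hsum _ (hmemp j)
    have h2 := hsum _ (hmemq j)
    have h3 : ∑ i, (1 - (f i (ptAx d j (α j)) + f i (ptAx d j (-(α j)))) / 2)
        = (n:ℝ) - ((∑ i, f i (ptAx d j (α j))) + ∑ i, f i (ptAx d j (-(α j)))) / 2 := by
      rw [Finset.sum_sub_distrib, Finset.sum_const, Finset.card_univ, Fintype.card_fin,
        nsmul_eq_mul, mul_one, ← Finset.sum_div, Finset.sum_add_distrib]
    rw [h3]
    linarith
  set J : Fin n → Fin d := fun i =>
    if h : f i 0 = 1 then (hdrop i h).choose else ⟨0, hd⟩ with hJ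
  have hJspec : ∀ i, ¬ f i 0 ≤ 1/2 →
      f i (ptAx d (J i) (α (J i))) + f i (ptAx d (J i) (-(α (J i)))) ≤ 2 - α (J i) := by
    intro i hi
    have h1 : f i 0 = 1 := (hdich i).resolve_right hi
    simp only [hJ, dif_pos h1]
    exact (hdrop i h1).choose_spec
  set A : Finset (Fin n) := Finset.univ.filter (fun i => f i 0 ≤ 1/2) with hA
  set Ac : Finset (Fin n) := Finset.univ.filter (fun i => ¬ f i 0 ≤ 1/2) with hAc
  set B : Fin d → Finset (Fin n) := fun j => Ac.filter (fun i => J i = j) with hB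
  have hcardn : A.card + ∑ j, (B j).card = n := by
    have h2 : Ac.card = ∑ j, (B j).card :=
      Finset.card_eq_sum_card_fiberwise (fun i _ => Finset.mem_univ (J i))
    rw [← h2, hA, hAc, Finset.card_filter_add_card_filter_not, Finset.card_univ,
      Fintype.card_fin]
  have hBj : ∀ j, ((B j).card : ℝ) * (α j / 2) + (A.card : ℝ) * (1/2) ≤ 2 := by
    intro j
    have hdisj : Disjoint (B j) A := by
      rw [Finset.disjoint_left]
      intro i hiB hiA
      simp only [hB, hAc, Finset.mem_filter, Finset.mem_univ, true_and] at hiB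
      simp only [hA, Finset.mem_filter, Finset.mem_univ, true_and] at hiA
      exact hiB.1 hiA
    have h1 : ((B j).card : ℝ) * (α j / 2)
        ≤ ∑ i ∈ B j, (1 - (f i (ptAx d j (α j)) + f i (ptAx d j (-(α j)))) / 2) := by
      have h := Finset.card_nsmul_le_sum (B j)
        (fun i => 1 - (f i (ptAx d j (α j)) + f i (ptAx d j (-(α j)))) / 2) (α j / 2) ?_
      · rwa [nsmul_eq_mul] at h
      · intro i hi
        simp only [hB, hAc, Finset.mem_filter, Finset.mem_univ, true_and] at hi
        have hds := hJspec i hi.1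
        rw [hi.2] at hds
        linarith
    have h2 : (A.card : ℝ) * (1/2)
        ≤ ∑ i ∈ A, (1 - (f i (ptAx d j (α j)) + f i (ptAx d j (-(α j)))) / 2) := by
      have h := Finset.card_nsmul_le_sum A
        (fun i => 1 - (f i (ptAx d j (α j)) + f i (ptAx d j (-(α j)))) / 2) (1/2) ?_
      · rwa [nsmul_eq_mul] at h
      · intro i hi
        simp only [hA, Finset.mem_filter, Finset.mem_univ, true_and] at hi
        have hds := hδ i j
        linarith
    have h3 := (Finset.sum_union (f := fun i =>
      1 - (f i (ptAx d j (α j)) + f i (ptAx d j (-(α j)))) / 2) hdisj).symm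
    have h4 : ∑ i ∈ B j ∪ A, (1 - (f i (ptAx d j (α j)) + f i (ptAx d j (-(α j)))) / 2)
        ≤ ∑ i, (1 - (f i (ptAx d j (α j)) + f i (ptAx d j (-(α j)))) / 2) :=
      Finset.sum_le_sum_of_subset_of_nonneg (Finset.subset_univ _) (fun i _ _ => hgnonneg j i)
    have h5 := hkey j
    rw [← h3] at h4
    linarith
  have hAcard : (0:ℝ) ≤ A.card := Nat.cast_nonneg _
  have hBle : ∀ j, ((B j).card : ℝ) ≤ 4 / α j - A.card := by
    intro j
    have hp := hαpos j
    have h1 := hα1 j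
    have h2 := hBj j
    have hBc : (0:ℝ) ≤ (B j).card := Nat.cast_nonneg _
    have h3 : (((B j).card : ℝ) + A.card) * α j ≤ 4 := by nlinarith
    have h4 : ((B j).card : ℝ) + A.card ≤ 4 / α j := by
      rw [le_div_iff₀ hp]
      exact h3
    linarith
  have h5 : ∑ j, ((B j).card:ℝ) ≤ ∑ j : Fin d, (4 / α j - A.card) :=
    Finset.sum_le_sum (fun j _ => hBle j)
  have h6 : ∑ j : Fin d, (4 / α j - (A.card:ℝ)) = (∑ j, 4 / α j) - d * A.card := by
    rw [Finset.sum_sub_distrib, Finset.sum_const, Finset.card_univ, Fintype.card_fin,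
      nsmul_eq_mul]
  have hd1 : (1:ℝ) ≤ d := by exact_mod_cast hd
  have hcast : ((A.card + ∑ j, (B j).card : ℕ) : ℝ) = (A.card:ℝ) + ∑ j, ((B j).card:ℝ) := by
    push_cast
    ring
  rw [hcardn] at hcast
  rw [h6] at h5
  have hprod : 0 ≤ ((d:ℝ) - 1) * A.card := mul_nonneg (by linarith) hAcard
  linarith [hcast, h5, hprod]

end
end

section
/- Let d be a positive integer and let Box = conv{e₁, −e₁, …, e_d, −e_d} ⊆ ℝ^d be the d-dimensional cross polytope, where e₁,…,e_d are the standard basis vectors. Then there exists normalized Fano data on Box consisting of exactly 4d functions. (Explicitly, one may take, for 0 ≤ j ≤ d−2, f_{1+4j}(x) = f_{2+4j}(x) = f_{3+4j}(x) = f_{4+4j}(x) = min{1, x_{j+1} + 1}, together with f_{4d−3}(x) = f_{4d−2}(x) = f_{4d−1}(x) = min{1, x_d + 1} and f_{4d}(x) = min{1, x_d + 1} − 2∑_{k=1}^{d} x_k.) In particular, the bound n ≤ c(Box) = 4d is attained on the cross polytope. -/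
open scoped BigOperators

noncomputable section

namespace CrossAux

/-- The ℓ¹ "norm". -/
def l1 (d : ℕ) (x : Fin d → ℝ) : ℝ := ∑ i, |x i|

lemma l1_nonneg {d : ℕ} (x : Fin d → ℝ) : 0 ≤ l1 d x :=
  Finset.sum_nonneg fun _ _ => abs_nonneg _

lemma abs_le_l1 {d : ℕ} (x : Fin d → ℝ) (i : Fin d) : |x i| ≤ l1 d x :=
  Finset.single_le_sum (f := fun k => |x k|) (fun _ _ => abs_nonneg _) (Finset.mem_univ i)

lemma max_sub_max (a : ℝ) : max a 0 - max (-a) 0 = a := by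
  rcases le_total 0 a with h | h
  · rw [max_eq_left h, max_eq_right (by linarith)]; ring
  · rw [max_eq_right h, max_eq_left (by linarith)]; ring

lemma max_add_max (a : ℝ) : max a 0 + max (-a) 0 = |a| := by
  rcases le_total 0 a with h | h
  · rw [max_eq_left h, max_eq_right (by linarith), abs_of_nonneg h]; ring
  · rw [max_eq_right h, max_eq_left (by linarith), abs_of_nonpos h]; ring

lemma min_form (a : ℝ) : min 1 (a + 1) = 1 - max (-a) 0 := by
  rcases le_total 0 a with h | h
  · rw [min_eq_left (by linarith), max_eq_right (by linarith)]; ring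
  · rw [min_eq_right (by linarith), max_eq_left (by linarith)]; ring

lemma four_min (t : ℝ) : 4 * min 1 (t + 1) - 2 * t = 4 - 2 * |t| := by
  rcases le_total 0 t with h | h
  · rw [min_eq_left (by linarith), abs_of_nonneg h]; ring
  · rw [min_eq_right (by linarith), abs_of_nonpos h]; ring

lemma dotZ_zero {d : ℕ} (x : Fin d → ℝ) : dotZ d x 0 = 0 := by simp [dotZ]

lemma dotZ_zero_arg {d : ℕ} (u : Fin d → ℤ) : dotZ d (0 : Fin d → ℝ) u = 0 := by
  simp [dotZ]

lemma dotZ_const {d : ℕ} (x : Fin d → ℝ) (c : ℤ) :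
    dotZ d x (fun _ => c) = (c : ℝ) * ∑ i, x i := by
  simp only [dotZ]
  rw [← Finset.sum_mul, mul_comm]

lemma dotZ_single {d : ℕ} (i : Fin d) (u : Fin d → ℤ) :
    dotZ d (Pi.single i 1) u = (u i : ℝ) := by
  simp [dotZ, Pi.single_apply, ite_mul]

lemma dotZ_neg_arg {d : ℕ} (x : Fin d → ℝ) (u : Fin d → ℤ) :
    dotZ d (-x) u = -dotZ d x u := by
  simp [dotZ, Finset.sum_neg_distrib]

lemma dotZ_add {d : ℕ} (x y : Fin d → ℝ) (u : Fin d → ℤ) :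
    dotZ d (x + y) u = dotZ d x u + dotZ d y u := by
  simp [dotZ, add_mul, Finset.sum_add_distrib]

lemma dotZ_smul {d : ℕ} (c : ℝ) (x : Fin d → ℝ) (u : Fin d → ℤ) :
    dotZ d (c • x) u = c * dotZ d x u := by
  simp only [dotZ, Pi.smul_apply, smul_eq_mul, Finset.mul_sum, mul_assoc]

lemma l1_single {d : ℕ} (i : Fin d) : l1 d (Pi.single i (1 : ℝ)) = 1 := by
  simp [l1, Pi.single_apply, apply_ite abs]

lemma l1_neg {d : ℕ} (x : Fin d → ℝ) : l1 d (-x) = l1 d x := by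
  simp [l1]

lemma l1_ball_convex {d : ℕ} : Convex ℝ {x : Fin d → ℝ | l1 d x ≤ 1} := by
  intro a ha b hb s t hs ht hst
  have : l1 d (s • a + t • b) ≤ s * l1 d a + t * l1 d b := by
    simp only [l1, Finset.mul_sum, ← Finset.sum_add_distrib]
    refine Finset.sum_le_sum fun i _ => ?_
    calc |(s • a + t • b) i| = |s * a i + t * b i| := by simp
      _ ≤ |s * a i| + |t * b i| := abs_add_le _ _
      _ = s * |a i| + t * |b i| := by
          rw [abs_mul, abs_mul, abs_of_nonneg hs, abs_of_nonneg ht]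
  have ha' : s * l1 d a ≤ s * 1 := by
    have := ha; exact mul_le_mul_of_nonneg_left ha hs
  have hb' : t * l1 d b ≤ t * 1 := mul_le_mul_of_nonneg_left hb ht
  simp only [Set.mem_setOf_eq] at *
  nlinarith

/-- Lattice generators of the graph of `x ↦ min 1 (x j + 1) + ⟨x, u⟩`. -/
def sig (d : ℕ) (j : Fin d) (u : Fin d → ℤ) : Option (Fin d × Bool) → (Fin d → ℤ) × ℤ
  | none => (0, 1)
  | some (i, true) => (Pi.single i 1, 1 + u i)
  | some (i, false) => (-Pi.single i 1, (if i = j then 0 else 1) - u i)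

/-- Barycentric weights realizing `x` from the generators. -/
def wt (d : ℕ) (x : Fin d → ℝ) : Option (Fin d × Bool) → ℝ
  | none => 1 - l1 d x
  | some (i, true) => max (x i) 0
  | some (i, false) => max (-(x i)) 0

lemma wt_nonneg {d : ℕ} (x : Fin d → ℝ) (hx : l1 d x ≤ 1) (o : Option (Fin d × Bool)) :
    0 ≤ wt d x o := by
  match o with
  | none => simp [wt]; linarith
  | some (i, true) => exact le_max_right _ _
  | some (i, false) => exact le_max_right _ _

lemma wt_sum {d : ℕ} (x : Fin d → ℝ) : ∑ o, wt d x o = 1 := by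
  rw [Fintype.sum_option, Fintype.sum_prod_type]
  have h : ∀ i : Fin d, ∑ b, wt d x (some (i, b)) = |x i| := by
    intro i
    rw [Fintype.sum_bool]
    simpa [wt] using max_add_max (x i)
  rw [Finset.sum_congr rfl fun i _ => h i]
  simp [wt, l1]

lemma cast_single {d : ℕ} (i : Fin d) :
    (fun k => ((Pi.single i (1 : ℤ) : Fin d → ℤ) k : ℝ)) = Pi.single i (1 : ℝ) := by
  funext k
  simp [Pi.single_apply, apply_ite (fun z : ℤ => (z : ℝ))]

lemma cast_neg_single {d : ℕ} (i : Fin d) :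
    (fun k => (((-Pi.single i (1 : ℤ)) : Fin d → ℤ) k : ℝ)) = -Pi.single i (1 : ℝ) := by
  funext k
  simp [Pi.single_apply, apply_ite (fun z : ℤ => (z : ℝ))]

lemma embed_sig_none {d : ℕ} (j : Fin d) (u : Fin d → ℤ) :
    latticeEmbed d (sig d j u none) = (0, 1) := by
  unfold latticeEmbed sig
  refine Prod.ext ?_ ?_
  · funext k; simp
  · simp

lemma embed_sig_true {d : ℕ} (j : Fin d) (u : Fin d → ℤ) (i : Fin d) :
    latticeEmbed d (sig d j u (some (i, true))) = (Pi.single i 1, 1 + (u i : ℝ)) := by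
  unfold latticeEmbed sig
  refine Prod.ext ?_ ?_
  · exact cast_single i
  · push_cast; rfl

lemma embed_sig_false {d : ℕ} (j : Fin d) (u : Fin d → ℤ) (i : Fin d) :
    latticeEmbed d (sig d j u (some (i, false))) =
      (-Pi.single i 1, (if i = j then (0 : ℝ) else 1) - (u i : ℝ)) := by
  unfold latticeEmbed sig
  refine Prod.ext ?_ ?_
  · exact cast_neg_single i
  · simp [apply_ite (fun z : ℤ => (z : ℝ))]

lemma fst_combo {d : ℕ} (j : Fin d) (u : Fin d → ℤ) (x : Fin d → ℝ) :
    (∑ o, wt d x o • latticeEmbed d (sig d j u o)).1 = x := by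
  rw [Prod.fst_sum]
  funext k
  rw [Finset.sum_apply]
  rw [Fintype.sum_option, Fintype.sum_prod_type]
  have h : ∀ i : Fin d,
      ∑ b, (wt d x (some (i, b)) • latticeEmbed d (sig d j u (some (i, b)))).1 k
        = (if k = i then x i else 0) := by
    intro i
    rw [Fintype.sum_bool]
    rw [embed_sig_true, embed_sig_false]
    simp only [wt, Prod.smul_mk, Pi.smul_apply, smul_eq_mul, Pi.neg_apply,
      Pi.single_apply]
    rcases le_total 0 (x i) with hs | hs
    · rw [max_eq_left hs, max_eq_right (by linarith : -x i ≤ 0)]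
      split_ifs <;> ring
    · rw [max_eq_right hs, max_eq_left (by linarith : (0:ℝ) ≤ -x i)]
      split_ifs <;> ring
  rw [Finset.sum_congr rfl fun i _ => h i]
  rw [embed_sig_none]
  rw [Finset.sum_ite_eq Finset.univ k (fun i => x i)]
  simp [wt]

lemma snd_combo {d : ℕ} (j : Fin d) (u : Fin d → ℤ) (x : Fin d → ℝ) :
    (∑ o, wt d x o • latticeEmbed d (sig d j u o)).2
      = min 1 (x j + 1) + dotZ d x u := by
  rw [Prod.snd_sum]
  rw [Fintype.sum_option, Fintype.sum_prod_type]
  have h : ∀ i : Fin d,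
      ∑ b, (wt d x (some (i, b)) • latticeEmbed d (sig d j u (some (i, b)))).2
        = |x i| + x i * (u i : ℝ) - (if i = j then max (-(x i)) 0 else 0) := by
    intro i
    rw [Fintype.sum_bool]
    rw [embed_sig_true, embed_sig_false]
    simp only [wt, Prod.smul_mk, smul_eq_mul]
    rcases le_total 0 (x i) with hs | hs
    · rw [max_eq_left hs, max_eq_right (by linarith : -x i ≤ 0), abs_of_nonneg hs]
      split_ifs <;> ring
    · rw [max_eq_right hs, max_eq_left (by linarith : (0:ℝ) ≤ -x i), abs_of_nonpos hs]
      split_ifs <;> ring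
  rw [Finset.sum_congr rfl fun i _ => h i]
  rw [embed_sig_none]
  rw [Finset.sum_sub_distrib, Finset.sum_add_distrib, Finset.sum_ite_eq' Finset.univ j
    (fun i => max (-(x i)) 0)]
  simp only [wt, Prod.smul_mk, Finset.mem_univ, if_true, smul_eq_mul, mul_one, min_form]
  have h1 : dotZ d x u = ∑ i, x i * (u i : ℝ) := rfl
  have h2 : l1 d x = ∑ i, |x i| := rfl
  rw [h1, h2]
  ring

lemma mem_graph {d : ℕ} (j : Fin d) (u : Fin d → ℤ) (x : Fin d → ℝ) (hx : l1 d x ≤ 1) :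
    (x, min 1 (x j + 1) + dotZ d x u) ∈
      convexHull ℝ (latticeEmbed d '' Set.range (sig d j u)) := by
  have h := Finset.centerMass_mem_convexHull (Finset.univ : Finset (Option (Fin d × Bool)))
    (w := wt d x) (z := fun o => latticeEmbed d (sig d j u o))
    (fun o _ => wt_nonneg x hx o) (by rw [wt_sum]; norm_num)
    (fun o _ => Set.mem_image_of_mem _ (Set.mem_range_self o))
  rw [Finset.centerMass_eq_of_sum_1 _ _ (wt_sum x)] at h
  have heq : (∑ o, wt d x o • latticeEmbed d (sig d j u o))
      = (x, min 1 (x j + 1) + dotZ d x u) :=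
    Prod.ext (fst_combo j u x) (snd_combo j u x)
  rwa [heq] at h

lemma graph_le {d : ℕ} (j : Fin d) (u : Fin d → ℤ) {p : (Fin d → ℝ) × ℝ}
    (hp : p ∈ convexHull ℝ (latticeEmbed d '' Set.range (sig d j u))) :
    p.2 ≤ 1 + dotZ d p.1 u ∧ p.2 ≤ p.1 j + 1 + dotZ d p.1 u := by
  have hsub : convexHull ℝ (latticeEmbed d '' Set.range (sig d j u)) ⊆
      {q : (Fin d → ℝ) × ℝ | q.2 ≤ 1 + dotZ d q.1 u ∧ q.2 ≤ q.1 j + 1 + dotZ d q.1 u} := by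
    apply convexHull_min
    · rintro _ ⟨_, ⟨o, rfl⟩, rfl⟩
      match o with
      | none =>
        rw [embed_sig_none]
        constructor <;> simp [dotZ_zero_arg]
      | some (i, true) =>
        rw [embed_sig_true]
        constructor
        · simp [dotZ_single]
        · simp only [Set.mem_setOf_eq, dotZ_single]
          have : (0:ℝ) ≤ (Pi.single i (1:ℝ) : Fin d → ℝ) j := by
            rw [Pi.single_apply]; split_ifs <;> norm_num
          linarith
      | some (i, false) =>
        rw [embed_sig_false]
        constructor
        · simp only [Set.mem_setOf_eq, dotZ_neg_arg, dotZ_single]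
          split_ifs <;> linarith
        · simp only [Set.mem_setOf_eq, dotZ_neg_arg, dotZ_single, Pi.neg_apply,
            Pi.single_apply]
          by_cases hij : i = j
          · subst hij; simp
          · have : ¬ (j = i) := fun h => hij h.symm
            simp [hij, this]
    · intro a ha b hb s t hs ht hst
      simp only [Set.mem_setOf_eq] at *
      have h1 : (s • a + t • b).1 = s • a.1 + t • b.1 := rfl
      have h2 : (s • a + t • b).2 = s * a.2 + t * b.2 := rfl
      have hd1 : dotZ d (s • a.1 + t • b.1) u = s * dotZ d a.1 u + t * dotZ d b.1 u := by
        rw [dotZ_add, dotZ_smul, dotZ_smul]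
      have hj1 : (s • a.1 + t • b.1) j = s * a.1 j + t * b.1 j := by simp
      constructor
      · rw [h2, h1, hd1]
        nlinarith [mul_le_mul_of_nonneg_left ha.1 hs, mul_le_mul_of_nonneg_left hb.1 ht]
      · rw [h2, h1, hd1, hj1]
        nlinarith [mul_le_mul_of_nonneg_left ha.2 hs, mul_le_mul_of_nonneg_left hb.2 ht]
  exact hsub hp

lemma l1_sig_fst {d : ℕ} (j : Fin d) (u : Fin d → ℤ) (o : Option (Fin d × Bool)) :
    l1 d (latticeEmbed d (sig d j u o)).1 ≤ 1 := by
  match o with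
  | none => rw [embed_sig_none]; simp [l1]
  | some (i, true) => rw [embed_sig_true]; simp [l1_single]
  | some (i, false) => rw [embed_sig_false]; rw [l1_neg, l1_single]

/-- The generic function `x ↦ min 1 (x j + 1) + ⟨x, u⟩` is ICPA on the ℓ¹ ball. -/
lemma icpa_gen {d : ℕ} (j : Fin d) (u : Fin d → ℤ) :
    IsICPA d {x : Fin d → ℝ | l1 d x ≤ 1} (fun x => min 1 (x j + 1) + dotZ d x u) := by
  classical
  refine ⟨Finset.univ.image (sig d j u), ?_, ?_⟩
  · have hS : ((Finset.univ.image (sig d j u) : Finset _) : Set ((Fin d → ℤ) × ℤ))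
        = Set.range (sig d j u) := by
      rw [Finset.coe_image, Finset.coe_univ, Set.image_univ]
    rw [hS]
    apply Set.Subset.antisymm
    · rintro _ ⟨p, hp, rfl⟩
      have hsub : convexHull ℝ (latticeEmbed d '' Set.range (sig d j u)) ⊆
          Prod.fst ⁻¹' {x : Fin d → ℝ | l1 d x ≤ 1} := by
        apply convexHull_min
        · rintro _ ⟨_, ⟨o, rfl⟩, rfl⟩
          exact l1_sig_fst j u o
        · intro a ha b hb s t hs ht hst
          exact l1_ball_convex ha hb hs ht hst
      exact hsub hp
    · intro x hx
      exact ⟨(x, min 1 (x j + 1) + dotZ d x u), mem_graph j u x hx, rfl⟩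
  · intro x hx
    have hS : ((Finset.univ.image (sig d j u) : Finset _) : Set ((Fin d → ℤ) × ℤ))
        = Set.range (sig d j u) := by
      rw [Finset.coe_image, Finset.coe_univ, Set.image_univ]
    rw [hS]
    constructor
    · exact mem_graph j u x hx
    · intro t ht
      have h := graph_le j u ht
      simp only [Set.mem_setOf_eq] at h ⊢
      have hmin : t - dotZ d x u ≤ min 1 (x j + 1) :=
        le_min (by linarith [h.1]) (by linarith [h.2])
      linarith

/-- The cross polytope is the ℓ¹ ball. -/
lemma crossPolytope_eq {d : ℕ} (hd : 0 < d) :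
    crossPolytope d = {x : Fin d → ℝ | l1 d x ≤ 1} := by
  apply Set.Subset.antisymm
  · apply convexHull_min
    · rintro x ⟨jj, h | h⟩ <;> subst h
      · simp only [Set.mem_setOf_eq, l1_single]; norm_num
      · simp only [Set.mem_setOf_eq, l1_neg, l1_single]; norm_num
    · exact l1_ball_convex
  · -- reverse inclusion: use the graph membership and project
    intro x hx
    set j0 : Fin d := ⟨0, hd⟩
    have hgens : latticeEmbed d '' Set.range (sig d j0 0) ⊆
        Prod.fst ⁻¹' (crossPolytope d) := by
      rintro _ ⟨_, ⟨o, rfl⟩, rfl⟩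
      match o with
      | none =>
        rw [embed_sig_none]
        simp only [Set.mem_preimage]
        show (0 : Fin d → ℝ) ∈ crossPolytope d
        unfold crossPolytope
        have hseg : (0 : Fin d → ℝ) ∈
            segment ℝ (Pi.single j0 (1:ℝ) : Fin d → ℝ) (-(Pi.single j0 (1:ℝ) : Fin d → ℝ)) :=
          ⟨1/2, 1/2, by norm_num, by norm_num, by norm_num, by rw [smul_neg]; abel⟩
        have h1 : (Pi.single j0 (1:ℝ) : Fin d → ℝ) ∈
            {x : Fin d → ℝ | ∃ j : Fin d, x = Pi.single j 1 ∨ x = -Pi.single j 1} :=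
          ⟨j0, Or.inl rfl⟩
        have h2 : (-(Pi.single j0 (1:ℝ) : Fin d → ℝ)) ∈
            {x : Fin d → ℝ | ∃ j : Fin d, x = Pi.single j 1 ∨ x = -Pi.single j 1} :=
          ⟨j0, Or.inr rfl⟩
        exact segment_subset_convexHull h1 h2 hseg
      | some (i, true) =>
        rw [embed_sig_true]
        simp only [Set.mem_preimage]
        show Pi.single i (1:ℝ) ∈ crossPolytope d
        exact subset_convexHull ℝ _ ⟨i, Or.inl rfl⟩
      | some (i, false) =>
        rw [embed_sig_false]
        simp only [Set.mem_preimage]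
        show -Pi.single i (1:ℝ) ∈ crossPolytope d
        exact subset_convexHull ℝ _ ⟨i, Or.inr rfl⟩
    have hsub : convexHull ℝ (latticeEmbed d '' Set.range (sig d j0 0)) ⊆
        Prod.fst ⁻¹' (crossPolytope d) := by
      apply convexHull_min hgens
      have : Convex ℝ (crossPolytope d) := convex_convexHull ℝ _
      exact this.linear_preimage (LinearMap.fst ℝ (Fin d → ℝ) ℝ)
    exact hsub (mem_graph j0 0 x hx)

lemma l1_continuous (d : ℕ) : Continuous (l1 d) :=
  continuous_finset_sum _ fun i _ => (continuous_apply i).abs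

lemma interior_eq {d : ℕ} (hd : 0 < d) :
    interior (crossPolytope d) = {x : Fin d → ℝ | l1 d x < 1} := by
  rw [crossPolytope_eq hd]
  apply Set.Subset.antisymm
  · intro x hx
    have hx1 : l1 d x ≤ 1 := by
      have := interior_subset hx
      simpa using this
    rcases lt_or_eq_of_le hx1 with h | h
    · exact h
    · exfalso
      rw [mem_interior_iff_mem_nhds] at hx
      rcases Metric.mem_nhds_iff.1 hx with ⟨ε, hε, hball⟩
      set y : Fin d → ℝ := fun i => (1 + ε / 2) * x i with hy
      have hyx : y ∈ Metric.ball x ε := by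
        rw [Metric.mem_ball, dist_pi_lt_iff hε]
        intro i
        have habs : |x i| ≤ 1 := h ▸ abs_le_l1 x i
        rw [Real.dist_eq]
        have : y i - x i = (ε / 2) * x i := by rw [hy]; ring
        rw [this, abs_mul, abs_of_pos (by linarith : (0:ℝ) < ε / 2)]
        nlinarith
      have hyB : l1 d y ≤ 1 := hball hyx
      have hly : l1 d y = (1 + ε / 2) * l1 d x := by
        simp only [l1, hy, abs_mul, abs_of_pos (by linarith : (0:ℝ) < 1 + ε / 2),
          Finset.mul_sum]
      rw [hly, ← h] at hyB
      nlinarith [l1_nonneg x, h ▸ (le_refl (1:ℝ))]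
  · refine interior_maximal ?_ (isOpen_lt (l1_continuous d) continuous_const)
    intro y hy
    simp only [Set.mem_setOf_eq] at hy ⊢
    exact le_of_lt hy

lemma frontier_eq {d : ℕ} (hd : 0 < d) :
    frontier (crossPolytope d) = {x : Fin d → ℝ | l1 d x = 1} := by
  have hcl : IsClosed {x : Fin d → ℝ | l1 d x ≤ 1} :=
    isClosed_le (l1_continuous d) continuous_const
  rw [frontier, interior_eq hd, crossPolytope_eq hd, hcl.closure_eq]
  ext x
  simp only [Set.mem_diff, Set.mem_setOf_eq, not_lt]
  constructor
  · rintro ⟨h1, h2⟩; linarith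
  · rintro h; exact ⟨le_of_eq h, ge_of_eq h⟩

/-- The generic function is at height one on any set. -/
lemma height_gen {d : ℕ} (j : Fin d) (u : Fin d → ℤ) (B : Set (Fin d → ℝ)) :
    AtHeightOne d B (fun x => min 1 (x j + 1) + dotZ d x u) := by
  intro x hx
  have hdn : ∀ y : Fin d → ℝ, dotZ d y (-u) = -dotZ d y u := by
    intro y; simp [dotZ, Finset.sum_neg_distrib]
  have hdn2 : ∀ y : Fin d → ℝ,
      dotZ d y (fun k => -u k - (Pi.single j (1:ℤ) : Fin d → ℤ) k) = -dotZ d y u - y j := by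
    intro y
    have expand : ∀ k : Fin d, y k * ((-u k - (Pi.single j (1:ℤ) : Fin d → ℤ) k : ℤ) : ℝ)
        = -(y k * (u k : ℝ)) - (if k = j then y k else 0) := by
      intro k
      rw [Pi.single_apply]
      split_ifs <;> push_cast <;> ring
    rw [dotZ, Finset.sum_congr rfl fun k _ => expand k, Finset.sum_sub_distrib]
    rw [Finset.sum_neg_distrib, Finset.sum_ite_eq' Finset.univ j (fun k => y k)]
    simp [dotZ]
  rcases le_total 0 (x j) with h | h
  · refine ⟨-u, 1, ?_, ?_⟩
    · have hval : dotZ d x (-u) + ((1:ℤ):ℝ) * (min 1 (x j + 1) + dotZ d x u) = 1 := by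
        rw [hdn, min_eq_left (by linarith)]; push_cast; ring
      rw [hval]; norm_num
    · intro y hy
      have hval : dotZ d x (-u) + ((1:ℤ):ℝ) * (min 1 (x j + 1) + dotZ d x u) = 1 := by
        rw [hdn, min_eq_left (by linarith)]; push_cast; ring
      rw [hval, hdn]
      push_cast
      have : min 1 (y j + 1) ≤ 1 := min_le_left _ _
      linarith
  · refine ⟨fun k => -u k - (Pi.single j (1:ℤ) : Fin d → ℤ) k, 1, ?_, ?_⟩
    · have hval : dotZ d x (fun k => -u k - (Pi.single j (1:ℤ) : Fin d → ℤ) k)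
          + ((1:ℤ):ℝ) * (min 1 (x j + 1) + dotZ d x u) = 1 := by
        rw [hdn2, min_eq_right (by linarith)]; push_cast; ring
      rw [hval]; norm_num
    · intro y hy
      have hval : dotZ d x (fun k => -u k - (Pi.single j (1:ℤ) : Fin d → ℤ) k)
          + ((1:ℤ):ℝ) * (min 1 (x j + 1) + dotZ d x u) = 1 := by
        rw [hdn2, min_eq_right (by linarith)]; push_cast; ring
      rw [hval, hdn2]
      push_cast
      rcases le_total 0 (y j) with hyj | hyj
      · have : min 1 (y j + 1) ≤ 1 := min_le_left _ _
        linarith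
      · rw [min_eq_right (by linarith)]
        linarith

/-- The generic function is not integral affine. -/
lemma notAffine_gen {d : ℕ} (hd : 0 < d) (j : Fin d) (u : Fin d → ℤ) :
    ¬ IsIntegralAffineOn d (crossPolytope d) (fun x => min 1 (x j + 1) + dotZ d x u) := by
  rw [crossPolytope_eq hd]
  rintro ⟨w, c, hw⟩
  have h0 := hw 0 (by simp [l1])
  have h1 := hw (Pi.single j 1) (by simp [l1_single])
  have h2 := hw (-Pi.single j 1) (by simp [l1_neg, l1_single])
  simp only [Pi.zero_apply, Pi.neg_apply, Pi.single_eq_same] at h0 h1 h2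
  rw [dotZ_zero_arg, dotZ_zero_arg] at h0
  rw [dotZ_single, dotZ_single] at h1
  rw [dotZ_neg_arg, dotZ_neg_arg, dotZ_single, dotZ_single] at h2
  norm_num at h0 h1 h2
  linarith

/-- The summation reindexing lemma. -/
lemma sum_div4 (g : ℕ → ℝ) (N : ℕ) :
    ∑ i ∈ Finset.range (4 * N), g (i / 4) = ∑ j ∈ Finset.range N, 4 * g j := by
  induction N with
  | zero => simp
  | succ n ih =>
    have h4 : 4 * (n + 1) = 4 * n + 1 + 1 + 1 + 1 := by ring
    rw [h4, Finset.sum_range_succ, Finset.sum_range_succ, Finset.sum_range_succ,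
      Finset.sum_range_succ, ih, Finset.sum_range_succ]
    have e1 : (4 * n) / 4 = n := by omega
    have e2 : (4 * n + 1) / 4 = n := by omega
    have e3 : (4 * n + 1 + 1) / 4 = n := by omega
    have e4 : (4 * n + 1 + 1 + 1) / 4 = n := by omega
    rw [e1, e2, e3, e4]; ring

/-- Index of the coordinate used by the `i`-th function. -/
def jdx (d : ℕ) (i : Fin (4 * d)) : Fin d :=
  ⟨(i : ℕ) / 4, by have := i.isLt; omega⟩

/-- Linear shift of the `i`-th function. -/
def uvec (d : ℕ) (i : Fin (4 * d)) : Fin d → ℤ :=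
  if (i : ℕ) = 4 * d - 1 then (fun _ => -2) else 0

/-- The `4d` functions of the normalized Fano data. -/
def Ffun (d : ℕ) (i : Fin (4 * d)) : (Fin d → ℝ) → ℝ :=
  fun x => min 1 (x (jdx d i) + 1) + dotZ d x (uvec d i)

lemma sum_F {d : ℕ} (hd : 0 < d) (x : Fin d → ℝ) :
    ∑ i, Ffun d i x = 4 * d - 2 * l1 d x := by
  have hsplit : ∑ i : Fin (4 * d), Ffun d i x
      = (∑ i : Fin (4 * d), min 1 (x (jdx d i) + 1))
        + ∑ i : Fin (4 * d), dotZ d x (uvec d i) := by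
    rw [← Finset.sum_add_distrib]
    rfl
  -- second sum
  have hlast : (4 * d - 1 : ℕ) < 4 * d := by omega
  set lastI : Fin (4 * d) := ⟨4 * d - 1, hlast⟩ with hlastI
  have hsecond : ∑ i : Fin (4 * d), dotZ d x (uvec d i) = -2 * ∑ k, x k := by
    have hterm : ∀ i : Fin (4 * d), dotZ d x (uvec d i)
        = if i = lastI then -2 * ∑ k, x k else 0 := by
      intro i
      by_cases hc : i = lastI
      · rw [if_pos hc]
        simp only [uvec]
        rw [if_pos (show (i : ℕ) = 4 * d - 1 by rw [hc]), dotZ_const]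
        push_cast
        ring
      · rw [if_neg hc]
        simp only [uvec]
        rw [if_neg (fun h => hc (Fin.ext h)), dotZ_zero]
    rw [Finset.sum_congr rfl fun i _ => hterm i]
    rw [Finset.sum_ite_eq' Finset.univ lastI (fun _ => -2 * ∑ k, x k)]
    simp
  -- first sum
  set g : ℕ → ℝ := fun k => if h : k < d then min 1 (x ⟨k, h⟩ + 1) else 0 with hg
  have hfirst : ∑ i : Fin (4 * d), min 1 (x (jdx d i) + 1)
      = ∑ j : Fin d, 4 * min 1 (x j + 1) := by
    have h1 : ∀ i : Fin (4 * d), min 1 (x (jdx d i) + 1) = g ((i : ℕ) / 4) := by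
      intro i
      have hlt : (i : ℕ) / 4 < d := by have := i.isLt; omega
      rw [hg]
      simp only [dif_pos hlt]
      rfl
    calc ∑ i : Fin (4 * d), min 1 (x (jdx d i) + 1)
        = ∑ i : Fin (4 * d), g ((i : ℕ) / 4) := Finset.sum_congr rfl fun i _ => h1 i
      _ = ∑ i ∈ Finset.range (4 * d), g (i / 4) :=
          Fin.sum_univ_eq_sum_range (fun n => g (n / 4)) (4 * d)
      _ = ∑ j ∈ Finset.range d, 4 * g j := sum_div4 g d
      _ = ∑ j : Fin d, 4 * g (j : ℕ) :=
          (Fin.sum_univ_eq_sum_range (fun n => 4 * g n) d).symm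
      _ = ∑ j : Fin d, 4 * min 1 (x j + 1) := by
          apply Finset.sum_congr rfl
          intro j _
          rw [hg]
          simp only [dif_pos j.isLt]
  rw [hsplit, hfirst, hsecond]
  have hpt : ∀ j : Fin d, 4 * min 1 (x j + 1) = 4 - 2 * |x j| + 2 * x j := by
    intro j
    have := four_min (x j)
    linarith
  rw [Finset.sum_congr rfl fun j _ => hpt j]
  have hsum3 : ∑ j : Fin d, (4 - 2 * |x j| + 2 * x j)
      = 4 * d - 2 * l1 d x + 2 * ∑ k, x k := by
    rw [Finset.sum_add_distrib, Finset.sum_sub_distrib, Finset.sum_const, ← Finset.mul_sum,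
      ← Finset.mul_sum, Finset.card_univ, Fintype.card_fin]
    have : l1 d x = ∑ i, |x i| := rfl
    rw [this, nsmul_eq_mul]
    ring
  rw [hsum3]
  ring

end CrossAux

/-- On the `d`-dimensional cross polytope there exists normalized Fano data consisting of
exactly `4d` functions; in particular, the bound `n ≤ c(Box) = 4d` is attained. -/
theorem cross_polytope_attains_bound (d : ℕ) (hd : 0 < d) :
    ∃ f : Fin (4 * d) → (Fin d → ℝ) → ℝ,
      NormalizedFanoData d (4 * d) (crossPolytope d) f := by
  classical
  refine ⟨CrossAux.Ffun d, ?_, ?_, ?_, ?_, ?_, ?_, ?_⟩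
  · intro i
    rw [CrossAux.crossPolytope_eq hd]
    exact CrossAux.icpa_gen (CrossAux.jdx d i) (CrossAux.uvec d i)
  · intro i
    exact CrossAux.height_gen (CrossAux.jdx d i) (CrossAux.uvec d i) _
  · intro i
    show 0 < min 1 ((0 : Fin d → ℝ) (CrossAux.jdx d i) + 1) + dotZ d 0 (CrossAux.uvec d i)
    rw [CrossAux.dotZ_zero_arg]
    norm_num
  · intro i
    exact CrossAux.notAffine_gen hd (CrossAux.jdx d i) (CrossAux.uvec d i)
  · intro x hx
    rw [CrossAux.crossPolytope_eq hd] at hx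
    rw [CrossAux.sum_F hd x]
    push_cast
    simp only [Set.mem_setOf_eq] at hx
    linarith
  · intro x hx
    rw [CrossAux.interior_eq hd] at hx
    rw [CrossAux.sum_F hd x]
    push_cast
    simp only [Set.mem_setOf_eq] at hx
    linarith
  · intro x hx
    left
    rw [CrossAux.frontier_eq hd] at hx
    rw [CrossAux.sum_F hd x]
    simp only [Set.mem_setOf_eq] at hx
    rw [hx]
    push_cast
    ring

end
end

section
/- Let d be a positive integer, let Box ⊆ ℝ^d be a full-dimensional lattice polytope with 0 in its interior, let v ∈ ℤ^d be a primitive vector, and let f₁,…,fₙ be normalized Fano data on Box. Then the number of indices i ∈ {1,…,n} such that fᵢ(0) < 1 (i.e., fᵢ is non-integral) or the restriction of fᵢ to Box ∩ ℝ·v is not affine is at most 4/α_v. -/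
open scoped BigOperators

noncomputable section

namespace NFDAux

open Set

variable {d : ℕ}

/-- point `t • v` on the line. -/
def lpt (v : Fin d → ℤ) (t : ℝ) : Fin d → ℝ := fun i => t * (v i : ℝ)

lemma lpt_zero (v : Fin d → ℤ) : lpt v 0 = 0 := by
  funext i; simp [lpt]

lemma dotZ_lpt (v u : Fin d → ℤ) (t : ℝ) :
    dotZ d (lpt v t) u = t * ((∑ i, v i * u i : ℤ) : ℝ) := by
  simp only [dotZ, lpt]
  push_cast
  rw [Finset.mul_sum]
  exact Finset.sum_congr rfl fun i _ => by ring

/-- Concavity of an ICPA function along the line. -/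
lemma concave_line {Box : Set (Fin d → ℝ)} {f : (Fin d → ℝ) → ℝ}
    (hicpa : IsICPA d Box f) {v : Fin d → ℤ} {a b lam mu : ℝ}
    (hlam : 0 ≤ lam) (hmu : 0 ≤ mu) (hs : lam + mu = 1)
    (ha : lpt v a ∈ Box) (hb : lpt v b ∈ Box) :
    lpt v (lam * a + mu * b) ∈ Box ∧
      lam * f (lpt v a) + mu * f (lpt v b) ≤ f (lpt v (lam * a + mu * b)) := by
  obtain ⟨S, hproj, hgr⟩ := hicpa
  set C := convexHull ℝ (latticeEmbed d '' (S : Set ((Fin d → ℤ) × ℤ))) with hC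
  have hCconv : Convex ℝ C := convex_convexHull ℝ _
  have hpa : ((lpt v a, f (lpt v a)) : (Fin d → ℝ) × ℝ) ∈ C := (hgr _ ha).1
  have hpb : ((lpt v b, f (lpt v b)) : (Fin d → ℝ) × ℝ) ∈ C := (hgr _ hb).1
  have hmemC : ((lpt v (lam * a + mu * b),
      lam * f (lpt v a) + mu * f (lpt v b)) : (Fin d → ℝ) × ℝ) ∈ C := by
    have h := hCconv hpa hpb hlam hmu hs
    have heq : lam • ((lpt v a, f (lpt v a)) : (Fin d → ℝ) × ℝ)
        + mu • ((lpt v b, f (lpt v b)) : (Fin d → ℝ) × ℝ)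
        = ((lpt v (lam * a + mu * b),
            lam * f (lpt v a) + mu * f (lpt v b)) : (Fin d → ℝ) × ℝ) := by
      apply Prod.ext
      · funext i; simp only [Prod.fst_add, Prod.smul_fst, Pi.add_apply, Pi.smul_apply, smul_eq_mul, lpt]; ring
      · simp only [Prod.snd_add, Prod.smul_snd, smul_eq_mul]
    rwa [heq] at h
  have hmemBox : lpt v (lam * a + mu * b) ∈ Box := by
    rw [← hproj]; exact ⟨_, hmemC, rfl⟩
  exact ⟨hmemBox, (hgr _ hmemBox).2 hmemC⟩

lemma lpt_mem_of_between {Box : Set (Fin d → ℝ)} (hconv : Convex ℝ Box)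
    {v : Fin d → ℤ} {a b t : ℝ} (ha : lpt v a ∈ Box) (hb : lpt v b ∈ Box)
    (h1 : a ≤ t) (h2 : t ≤ b) : lpt v t ∈ Box := by
  rcases eq_or_lt_of_le (h1.trans h2) with h | h
  · have : t = a := le_antisymm (h ▸ h2) h1
    rwa [this]
  · set lam := (b - t) / (b - a) with hlamdef
    set mu := (t - a) / (b - a) with hmudef
    have hba : (0:ℝ) < b - a := by linarith
    have hlam : 0 ≤ lam := by apply div_nonneg <;> linarith
    have hmu : 0 ≤ mu := by apply div_nonneg <;> linarith
    have hs : lam + mu = 1 := by rw [hlamdef, hmudef]; field_simp; ring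
    have h := hconv ha hb hlam hmu hs
    have heq : lam • lpt v a + mu • lpt v b = lpt v t := by
      funext i
      have ht : lam * a + mu * b = t := by
        rw [hlamdef, hmudef]; field_simp; ring
      simp only [Pi.add_apply, Pi.smul_apply, smul_eq_mul, lpt]
      calc lam * (a * (v i : ℝ)) + mu * (b * (v i : ℝ))
          = (lam * a + mu * b) * (v i : ℝ) := by ring
        _ = t * (v i : ℝ) := by rw [ht]
    rwa [heq] at h

/-- height one at `0` forces `f 0 = 1/|m|`. -/
lemma f_zero_facts {Box : Set (Fin d → ℝ)} {f : (Fin d → ℝ) → ℝ}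
    (hh1 : AtHeightOne d Box f) (h0 : (0 : Fin d → ℝ) ∈ Box) (hpos : 0 < f 0) :
    f 0 ≤ 1 ∧ (f 0 < 1 → f 0 ≤ 1 / 2) := by
  obtain ⟨u, m, habs, -⟩ := hh1 0 h0
  have hdz : dotZ d 0 u = 0 := by simp [dotZ]
  rw [hdz, zero_add, abs_mul] at habs
  have hfabs : |f 0| = f 0 := abs_of_pos hpos
  rw [hfabs] at habs
  have hm0 : m ≠ 0 := by
    rintro rfl
    norm_num at habs
  have hm1 : (1:ℝ) ≤ |(m:ℝ)| := by
    rw [← Int.cast_abs]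
    exact_mod_cast Int.one_le_abs hm0
  constructor
  · nlinarith [abs_nonneg (m:ℝ)]
  · intro hlt
    have hm2 : (2:ℝ) ≤ |(m:ℝ)| := by
      by_contra hcon
      push_neg at hcon
      have ha2 : |m| < 2 := by exact_mod_cast (by rw [← Int.cast_abs] at hcon; exact_mod_cast hcon : ((|m|:ℤ):ℝ) < 2)
      have ha1 : 1 ≤ |m| := Int.one_le_abs hm0
      have : |m| = 1 := by omega
      have : |(m:ℝ)| = 1 := by rw [← Int.cast_abs, this]; norm_num
      rw [this, one_mul] at habs
      linarith
    nlinarith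

end NFDAux
namespace NFDAux

open Set Filter Topology

variable {d : ℕ}

/-- If `f` agrees with an affine function on the open segment `(0, t*)`,
then at `t*` the value is at least the affine value (closedness of the hull). -/
lemma limit_endpoint {Box : Set (Fin d → ℝ)} {f : (Fin d → ℝ) → ℝ}
    (hicpa : IsICPA d Box f) {v : Fin d → ℤ} {tstar c r : ℝ}
    (hmem : lpt v tstar ∈ Box)
    (hmemθ : ∀ θ : ℝ, 0 < θ → θ < 1 → lpt v (θ * tstar) ∈ Box)
    (hall : ∀ θ : ℝ, 0 < θ → θ < 1 → f (lpt v (θ * tstar)) = c + r * (θ * tstar)) :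
    c + r * tstar ≤ f (lpt v tstar) := by
  obtain ⟨S, hproj, hgr⟩ := hicpa
  set C := convexHull ℝ (latticeEmbed d '' (S : Set ((Fin d → ℤ) × ℤ))) with hC
  have hCcl : IsClosed C := ((S.finite_toSet.image _).isCompact_convexHull (𝕜 := ℝ)).isClosed
  set θ : ℕ → ℝ := fun k => 1 - 1 / ((k : ℝ) + 2) with hθ
  have hθ01 : ∀ k : ℕ, 0 < θ k ∧ θ k < 1 := by
    intro k
    have h2 : (0:ℝ) < (k:ℝ) + 2 := by positivity
    have h3 : 1 / ((k:ℝ) + 2) < 1 := by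
      rw [div_lt_one h2]; linarith
    have h4 : 0 < 1 / ((k:ℝ) + 2) := by positivity
    constructor <;> simp only [hθ] <;> linarith
  have hmemC : ∀ k : ℕ, ((lpt v (θ k * tstar), c + r * (θ k * tstar)) : (Fin d → ℝ) × ℝ) ∈ C := by
    intro k
    have h1 := (hθ01 k).1
    have h2 := (hθ01 k).2
    have hx := hmemθ _ h1 h2
    have := (hgr _ hx).1
    rwa [hall _ h1 h2] at this
  have hθlim : Tendsto θ atTop (𝓝 1) := by
    have h1 : Tendsto (fun k : ℕ => 1 / ((k:ℝ) + 2)) atTop (𝓝 0) := by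
      have h := (tendsto_one_div_add_atTop_nhds_zero_nat (𝕜 := ℝ)).comp (tendsto_add_atTop_nat 1)
      have he : ((fun n : ℕ => 1 / ((n:ℝ) + 1)) ∘ fun a => a + 1) = fun k : ℕ => 1 / ((k:ℝ) + 2) := by
        funext k
        simp only [Function.comp_apply]
        push_cast
        ring
      rwa [he] at h
    have h := (tendsto_const_nhds : Tendsto (fun _ : ℕ => (1:ℝ)) atTop (𝓝 1)).sub h1
    simpa [hθ] using h
  have hcont : Continuous fun s : ℝ => ((lpt v (s * tstar), c + r * (s * tstar)) : (Fin d → ℝ) × ℝ) := by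
    apply Continuous.prodMk
    · apply continuous_pi
      intro i
      simp only [lpt]
      fun_prop
    · fun_prop
  have hlim : Tendsto (fun k => ((lpt v (θ k * tstar), c + r * (θ k * tstar)) : (Fin d → ℝ) × ℝ))
      atTop (𝓝 (lpt v tstar, c + r * tstar)) := by
    have := (hcont.tendsto 1).comp hθlim
    simpa [Function.comp_def] using this
  have hlimC : ((lpt v tstar, c + r * tstar) : (Fin d → ℝ) × ℝ) ∈ C :=
    hCcl.mem_of_tendsto hlim (Filter.Eventually.of_forall hmemC)
  exact (hgr _ hmem).2 hlimC

end NFDAux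
namespace NFDAux

variable {d : ℕ}

/-- At an interior point of the line, the height-one supporting functional of a
non-affine `f` with `f 0 = 1` has `m = 1` and value `1`: it is an integral line
through `(0,1)`. -/
lemma supporting {Box : Set (Fin d → ℝ)} {f : (Fin d → ℝ) → ℝ} {v : Fin d → ℤ}
    (hicpa : IsICPA d Box f) (hh1 : AtHeightOne d Box f)
    (hNA : ¬ AffineOnLine d Box v f) (h0 : (0 : Fin d → ℝ) ∈ Box) (hf0 : f 0 = 1)
    {t₁ δ : ℝ} (hδ : 0 < δ)
    (hmargin : ∀ t : ℝ, t₁ - δ ≤ t → t ≤ t₁ + δ → lpt v t ∈ Box) :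
    ∃ s : ℤ, (∀ t : ℝ, lpt v t ∈ Box → f (lpt v t) ≤ 1 - (s : ℝ) * t) ∧
      f (lpt v t₁) = 1 - (s : ℝ) * t₁ := by
  have hmem1 : lpt v t₁ ∈ Box := hmargin t₁ (by linarith) (by linarith)
  obtain ⟨u, m, habs, hsup⟩ := hh1 (lpt v t₁) hmem1
  set s : ℤ := ∑ i, v i * u i with hs
  have hdz : ∀ t : ℝ, dotZ d (lpt v t) u = t * (s : ℝ) := fun t => dotZ_lpt v u t
  -- the value at `t₁`
  set val : ℝ := t₁ * (s : ℝ) + (m : ℝ) * f (lpt v t₁) with hval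
  have habs' : |val| = 1 := by rwa [hdz] at habs
  have hsup' : ∀ t : ℝ, lpt v t ∈ Box → t * (s : ℝ) + (m : ℝ) * f (lpt v t) ≤ val := by
    intro t ht
    have h := hsup (lpt v t) ht
    simp only [hdz] at h
    exact h
  -- m = 0 is impossible
  have hmne : m ≠ 0 := by
    rintro rfl
    have h1 := hsup' (t₁ + δ) (hmargin _ (by linarith) (by linarith))
    have h2 := hsup' (t₁ - δ) (hmargin _ (by linarith) (by linarith))
    simp only [Int.cast_zero, zero_mul, add_zero] at h1 h2 hval
    have hs0 : (s : ℝ) = 0 := by nlinarith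
    rw [hval, hs0] at habs'
    norm_num at habs'
  -- m < 0 forces f affine on the line, contradiction
  have hmpos : 0 < m := by
    rcases lt_trichotomy m 0 with hm | hm | hm
    · exfalso
      have hm0 : (m : ℝ) < 0 := by exact_mod_cast hm
      have key : ∀ t₀ : ℝ, lpt v t₀ ∈ Box →
          t₀ * (s : ℝ) + (m : ℝ) * f (lpt v t₀) = val := by
        intro t₀ ht₀
        refine le_antisymm (hsup' _ ht₀) ?_
        by_contra hcon
        push_neg at hcon
        rcases eq_or_ne t₀ t₁ with rfl | hne
        · simp only [hval] at hcon; linarith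
        -- pick the point on the other side
        obtain ⟨t₂, lam, mu, hlam, hmu, hlm, ht₂mem, hcomb⟩ :
            ∃ (t₂ lam mu : ℝ), 0 < lam ∧ 0 ≤ mu ∧ lam + mu = 1 ∧
              lpt v t₂ ∈ Box ∧ lam * t₀ + mu * t₂ = t₁ := by
          rcases lt_or_gt_of_ne hne with hlt | hgt
          · refine ⟨t₁ + δ, δ / (t₁ + δ - t₀), (t₁ - t₀) / (t₁ + δ - t₀), ?_, ?_, ?_,
              hmargin _ (by linarith) (by linarith), ?_⟩
            · apply div_pos hδ; linarith
            · apply div_nonneg <;> linarith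
            · rw [← add_div, div_eq_one_iff_eq (by linarith)]; ring
            · rw [div_mul_eq_mul_div, div_mul_eq_mul_div, ← add_div,
                div_eq_iff (by linarith : t₁ + δ - t₀ ≠ 0)]; ring
          · refine ⟨t₁ - δ, δ / (t₀ - t₁ + δ), (t₀ - t₁) / (t₀ - t₁ + δ), ?_, ?_, ?_,
              hmargin _ (by linarith) (by linarith), ?_⟩
            · apply div_pos hδ; linarith
            · apply div_nonneg <;> linarith
            · rw [← add_div, div_eq_one_iff_eq (by linarith)]; ring
            · rw [div_mul_eq_mul_div, div_mul_eq_mul_div, ← add_div,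
                div_eq_iff (by linarith : t₀ - t₁ + δ ≠ 0)]; ring
        obtain ⟨-, hconc⟩ := concave_line hicpa hlam.le hmu hlm ht₀ ht₂mem
        rw [hcomb] at hconc
        have h1 : (m : ℝ) * f (lpt v t₁) ≤ (m : ℝ) * (lam * f (lpt v t₀) + mu * f (lpt v t₂)) :=
          mul_le_mul_of_nonpos_left hconc hm0.le
        have h2 : val ≤ lam * (t₀ * (s:ℝ) + (m:ℝ) * f (lpt v t₀))
            + mu * (t₂ * (s:ℝ) + (m:ℝ) * f (lpt v t₂)) := by
          calc val = t₁ * (s:ℝ) + (m:ℝ) * f (lpt v t₁) := hval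
            _ ≤ t₁ * (s:ℝ) + (m:ℝ) * (lam * f (lpt v t₀) + mu * f (lpt v t₂)) := by linarith
            _ = lam * (t₀ * (s:ℝ) + (m:ℝ) * f (lpt v t₀))
                + mu * (t₂ * (s:ℝ) + (m:ℝ) * f (lpt v t₂)) := by
                rw [← hcomb]; ring
        have h4 : lam * (t₀ * (s:ℝ) + (m:ℝ) * f (lpt v t₀)) < lam * val :=
          (mul_lt_mul_iff_right₀ hlam).mpr hcon
        have h5 : mu * (t₂ * (s:ℝ) + (m:ℝ) * f (lpt v t₂)) ≤ mu * val :=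
          mul_le_mul_of_nonneg_left (hsup' _ ht₂mem) hmu
        have h6 : lam * val + mu * val = val := by linear_combination val * hlm
        linarith
      apply hNA
      refine ⟨-(s:ℝ)/(m:ℝ), val/(m:ℝ), fun t ht => ?_⟩
      have hk := key t ht
      have : f (lpt v t) = (val - t * (s:ℝ)) / (m:ℝ) := by
        field_simp
        linarith
      rw [show f (fun i => t * (v i : ℝ)) = f (lpt v t) from rfl, this]
      field_simp
      ring
    · exact absurd hm hmne
    · exact hm
  -- now m ≥ 1; value at 0 gives m = 1 and val = 1
  have h0sup : (m : ℝ) ≤ val := by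
    have := hsup' 0 (by rw [lpt_zero]; exact h0)
    rwa [lpt_zero, hf0, zero_mul, zero_add, mul_one] at this
  have hm1 : (1 : ℝ) ≤ (m : ℝ) := by exact_mod_cast hmpos
  have hval1 : val = 1 := by
    rcases abs_cases val with ⟨h, -⟩ | ⟨h, -⟩ <;> [skip; skip] <;> linarith [habs']
  have hmeq : (m : ℝ) = 1 := le_antisymm (by linarith) hm1
  refine ⟨s, fun t ht => ?_, ?_⟩
  · have := hsup' t ht
    rw [hmeq, one_mul, hval1] at this
    linarith [this]
  · have : t₁ * (s:ℝ) + (m:ℝ) * f (lpt v t₁) = val := rfl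
    rw [hmeq, one_mul, hval1] at this
    linarith

end NFDAux
namespace NFDAux

variable {d : ℕ}

lemma pair_concave {Box : Set (Fin d → ℝ)} {f : (Fin d → ℝ) → ℝ} {v : Fin d → ℤ}
    (hicpa : IsICPA d Box f) {α : ℝ}
    (hmα : lpt v α ∈ Box) (hmmα : lpt v (-α) ∈ Box) :
    f (lpt v α) + f (lpt v (-α)) ≤ 2 * f 0 := by
  obtain ⟨-, hc⟩ := concave_line (v := v) (a := α) (b := -α) hicpa
    (by norm_num : (0:ℝ) ≤ 1/2) (by norm_num : (0:ℝ) ≤ 1/2) (by norm_num) hmα hmmα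
  have he : (1/2 : ℝ) * α + (1/2 : ℝ) * (-α) = 0 := by ring
  rw [he, lpt_zero] at hc
  linarith

/-- The key per-function estimate for a bad index. -/
lemma pair_bound_bad {Box : Set (Fin d → ℝ)} {f : (Fin d → ℝ) → ℝ} {v : Fin d → ℤ}
    (hicpa : IsICPA d Box f) (hh1 : AtHeightOne d Box f)
    (h0 : (0 : Fin d → ℝ) ∈ Box) (hconv : Convex ℝ Box) (hpos : 0 < f 0)
    {α : ℝ} (hα : 0 < α) (hα1 : α ≤ 1)
    (hmα : lpt v α ∈ Box) (hmmα : lpt v (-α) ∈ Box)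
    (hbad : f 0 < 1 ∨ ¬ AffineOnLine d Box v f) :
    f (lpt v α) + f (lpt v (-α)) ≤ 2 - α := by
  have hzf := f_zero_facts hh1 h0 hpos
  have hpc := pair_concave hicpa hmα hmmα
  by_cases hlt : f 0 < 1
  · have := hzf.2 hlt
    linarith
  -- now `f 0 = 1` and `f` is not affine on the line
  have hf0 : f 0 = 1 := le_antisymm hzf.1 (not_lt.mp hlt)
  have hNA : ¬ AffineOnLine d Box v f := by
    rcases hbad with h | h
    · exact absurd h hlt
    · exact h
  have h0' : lpt v 0 ∈ Box := by rw [lpt_zero]; exact h0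
  have hIcc : ∀ t : ℝ, -α ≤ t → t ≤ α → lpt v t ∈ Box :=
    fun t h1 h2 => lpt_mem_of_between hconv hmmα hmα h1 h2
  obtain ⟨s₀, hs₀le, -⟩ := supporting (t₁ := α/2) (δ := α/2) hicpa hh1 hNA h0 hf0
    (by positivity) (fun t h1 h2 => hIcc t (by linarith) (by linarith))
  -- a point where `f` falls strictly below the line `1 - s₀ t`
  have hw : ∃ T : ℝ, lpt v T ∈ Box ∧ f (lpt v T) < 1 - (s₀ : ℝ) * T := by
    by_contra hno
    push_neg at hno
    apply hNA
    refine ⟨-(s₀ : ℝ), 1, fun t ht => ?_⟩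
    have h1 := hs₀le t ht
    have h2 := hno t ht
    show f (lpt v t) = -(s₀ : ℝ) * t + 1
    linarith
  obtain ⟨T, hTmem, hTlt⟩ := hw
  have hTne : T ≠ 0 := by
    rintro rfl
    rw [lpt_zero, hf0] at hTlt
    norm_num at hTlt
  by_cases hint : ∃ t₁ δ : ℝ, t₁ ≠ 0 ∧ 0 < δ ∧
      (∀ t : ℝ, t₁ - δ ≤ t → t ≤ t₁ + δ → lpt v t ∈ Box) ∧
      f (lpt v t₁) < 1 - (s₀ : ℝ) * t₁
  · obtain ⟨t₁, δ, ht₁ne, hδ, hmar, hstrict⟩ := hint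
    obtain ⟨s₁, hs₁le, hs₁eq⟩ := supporting hicpa hh1 hNA h0 hf0 hδ hmar
    have hlt' : (s₀ : ℝ) * t₁ < (s₁ : ℝ) * t₁ := by
      rw [hs₁eq] at hstrict
      linarith
    rcases lt_or_gt_of_ne ht₁ne with ht₁ | ht₁
    · -- t₁ < 0 : s₁ < s₀
      have hscmp : s₁ < s₀ := by
        have : (s₁ : ℝ) < (s₀ : ℝ) := by
          nlinarith
        exact_mod_cast this
      have hscmp' : (s₁ : ℝ) ≤ (s₀ : ℝ) - 1 := by
        have : s₁ ≤ s₀ - 1 := by omega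
        exact_mod_cast this
      have hA := hs₀le α hmα
      have hB := hs₁le (-α) hmmα
      have hmul : (s₁ : ℝ) * α ≤ ((s₀ : ℝ) - 1) * α :=
        mul_le_mul_of_nonneg_right hscmp' hα.le
      linarith
    · -- t₁ > 0 : s₀ < s₁
      have hscmp : s₀ < s₁ := by
        have : (s₀ : ℝ) < (s₁ : ℝ) := by
          nlinarith
        exact_mod_cast this
      have hscmp' : (s₀ : ℝ) + 1 ≤ (s₁ : ℝ) := by
        have : s₀ + 1 ≤ s₁ := by omega
        exact_mod_cast this
      have hA := hs₁le α hmα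
      have hB := hs₀le (-α) hmmα
      have hmul : ((s₀ : ℝ) + 1) * α ≤ (s₁ : ℝ) * α :=
        mul_le_mul_of_nonneg_right hscmp' hα.le
      linarith
  · -- no interior strict point : `f` equals the line on the open segment `(0,T)`,
    -- contradiction with closedness at `T`.
    exfalso
    push_neg at hint
    have hend : (1 : ℝ) + (-(s₀ : ℝ)) * T ≤ f (lpt v T) := by
      apply limit_endpoint hicpa hTmem
      · intro θ hθ0 hθ1
        rcases lt_or_gt_of_ne hTne with hT | hT
        · exact lpt_mem_of_between hconv hTmem h0'
            (by nlinarith) (by nlinarith)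
        · exact lpt_mem_of_between hconv h0' hTmem
            (by nlinarith) (by nlinarith)
      · intro θ hθ0 hθ1
        have hθT : θ * T ≠ 0 := by
          rcases lt_or_gt_of_ne hTne with hT | hT
          · exact ne_of_lt (by nlinarith)
          · exact ne_of_gt (by nlinarith)
        rcases lt_or_gt_of_ne hTne with hT | hT
        · -- T < 0 ; margin inside (T, 0)
          set δ' : ℝ := min (θ * (-T)) ((1 - θ) * (-T)) with hδ'def
          have hδ'pos : 0 < δ' := by
            apply lt_min <;> nlinarith
          have hmar : ∀ t : ℝ, θ * T - δ' ≤ t → t ≤ θ * T + δ' → lpt v t ∈ Box := by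
            intro t h1 h2
            have e1 : δ' ≤ (1 - θ) * (-T) := min_le_right _ _
            have e2 : δ' ≤ θ * (-T) := min_le_left _ _
            exact lpt_mem_of_between hconv hTmem h0' (by nlinarith) (by nlinarith)
          have h1 := hint (θ * T) δ' hθT hδ'pos hmar
          have h2 := hs₀le (θ * T) (hmar _ (by linarith) (by linarith))
          have : f (lpt v (θ * T)) = 1 - (s₀ : ℝ) * (θ * T) := le_antisymm h2 h1
          rw [this]; ring
        · -- T > 0 ; margin inside (0, T)
          set δ' : ℝ := min (θ * T) ((1 - θ) * T) with hδ'def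
          have hδ'pos : 0 < δ' := by
            apply lt_min <;> nlinarith
          have hmar : ∀ t : ℝ, θ * T - δ' ≤ t → t ≤ θ * T + δ' → lpt v t ∈ Box := by
            intro t h1 h2
            have e1 : δ' ≤ (1 - θ) * T := min_le_right _ _
            have e2 : δ' ≤ θ * T := min_le_left _ _
            exact lpt_mem_of_between hconv h0' hTmem (by nlinarith) (by nlinarith)
          have h1 := hint (θ * T) δ' hθT hδ'pos hmar
          have h2 := hs₀le (θ * T) (hmar _ (by linarith) (by linarith))
          have : f (lpt v (θ * T)) = 1 - (s₀ : ℝ) * (θ * T) := le_antisymm h2 h1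
          rw [this]; ring
    linarith

end NFDAux
/-- For a primitive `v ∈ ℤ^d`, at most `4/α_v` of the functions of normalized Fano data are
non-integral or non-affine along the line spanned by `v`. -/
theorem bound_nonintegral_or_nonlinear_along_line
    (d : ℕ) (hd : 0 < d) (Box : Set (Fin d → ℝ)) (hlat : IsLatticePolytope d Box)
    (h0 : (0 : Fin d → ℝ) ∈ interior Box)
    (v : Fin d → ℤ) (hv : IsPrimitive d v)
    (n : ℕ) (f : Fin n → (Fin d → ℝ) → ℝ)
    (hf : NormalizedFanoData d n Box f) :
    (({i : Fin n | f i 0 < 1 ∨ ¬ AffineOnLine d Box v (f i)}.ncard : ℝ)) ≤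
      4 / alphaV d Box v := by
  classical
  open NFDAux in
  obtain ⟨hicpa, hh1, hpos, -, hge, -, -⟩ := hf
  obtain ⟨S, hSeq⟩ := hlat
  have hconv : Convex ℝ Box := hSeq ▸ convex_convexHull ℝ _
  have hcomp : IsCompact Box := hSeq ▸ (S.finite_toSet.image _).isCompact_convexHull (𝕜 := ℝ)
  have hclosed : IsClosed Box := hcomp.isClosed
  have h0B : (0 : Fin d → ℝ) ∈ Box := interior_subset h0
  have h0' : NFDAux.lpt v 0 ∈ Box := by rw [NFDAux.lpt_zero]; exact h0B
  -- `v ≠ 0`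
  have hvne : v ≠ 0 := by
    rintro rfl
    rw [IsPrimitive] at hv
    have hz : Finset.univ.gcd (0 : Fin d → ℤ) = 0 :=
      Finset.gcd_eq_zero_iff.mpr fun i _ => rfl
    rw [hz] at hv
    exact absurd hv (by norm_num)
  set vR : Fin d → ℝ := fun i => (v i : ℝ) with hvR
  have hvRne : vR ≠ 0 := by
    intro h
    apply hvne
    funext i
    have := congrFun h i
    simpa [hvR] using this
  have hvRnorm : 0 < ‖vR‖ := norm_pos_iff.mpr hvRne
  have hlpt_smul : ∀ t : ℝ, NFDAux.lpt v t = t • vR := by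
    intro t; funext i; simp [NFDAux.lpt, hvR]
  -- the set defining `alphaV`
  set A : Set ℝ := {a : ℝ | 0 ≤ a ∧ NFDAux.lpt v a ∈ Box ∧ NFDAux.lpt v (-a) ∈ Box} with hA
  have hneg : ∀ a : ℝ, (fun i => -(a * (v i : ℝ))) = NFDAux.lpt v (-a) := by
    intro a; funext i; simp [NFDAux.lpt]
  have hAeq : alphaV d Box v = min 1 (sSup A) := by
    rw [alphaV]
    congr 1
    congr 1
    ext a
    rw [hA]
    simp only [Set.mem_setOf_eq]
    rw [hneg a]
    rfl
  have h0'' : NFDAux.lpt v 0 ∈ Box := h0'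
  have hA0 : (0 : ℝ) ∈ A := ⟨le_refl 0, h0'', by rw [neg_zero]; exact h0''⟩
  -- a positive element of `A`
  obtain ⟨ε, hε, hball⟩ := Metric.isOpen_iff.mp isOpen_interior 0 h0
  set δ : ℝ := ε / (2 * ‖vR‖) with hδdef
  have hδpos : 0 < δ := by positivity
  have hnormlt : ∀ t : ℝ, |t| = δ → NFDAux.lpt v t ∈ Box := by
    intro t ht
    apply interior_subset
    apply hball
    rw [Metric.mem_ball, dist_zero_right, hlpt_smul, norm_smul, Real.norm_eq_abs, ht, hδdef]
    rw [div_mul_eq_mul_div]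
    rw [div_lt_iff₀ (by positivity)]
    nlinarith
  have hδA : δ ∈ A := by
    refine ⟨hδpos.le, hnormlt δ (abs_of_pos hδpos), hnormlt (-δ) ?_⟩
    rw [abs_neg, abs_of_pos hδpos]
  -- `A` is bounded above and closed
  have hbdd : BddAbove A := by
    obtain ⟨R, hR⟩ := hcomp.isBounded.exists_norm_le
    refine ⟨R / ‖vR‖, fun a ha => ?_⟩
    have h1 : ‖NFDAux.lpt v a‖ ≤ R := hR _ ha.2.1
    rw [hlpt_smul, norm_smul, Real.norm_eq_abs, abs_of_nonneg ha.1] at h1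
    rw [le_div_iff₀ hvRnorm]
    exact h1
  have hAc : IsClosed A := by
    have h1 : Continuous fun a : ℝ => NFDAux.lpt v a := by
      apply continuous_pi; intro i; simp only [NFDAux.lpt]; fun_prop
    have h2 : Continuous fun a : ℝ => NFDAux.lpt v (-a) := by
      apply continuous_pi; intro i; simp only [NFDAux.lpt]; fun_prop
    have heq : A = Set.Ici (0:ℝ) ∩
        ((fun a : ℝ => NFDAux.lpt v a) ⁻¹' Box ∩ (fun a : ℝ => NFDAux.lpt v (-a)) ⁻¹' Box) := by
      ext a
      simp [hA, Set.mem_Ici, and_assoc]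
    rw [heq]
    exact isClosed_Ici.inter ((hclosed.preimage h1).inter (hclosed.preimage h2))
  have hsupA : sSup A ∈ A := hAc.csSup_mem ⟨0, hA0⟩ hbdd
  -- `A` is downward closed on nonnegatives
  have hdc : ∀ a ∈ A, ∀ b : ℝ, 0 ≤ b → b ≤ a → b ∈ A := by
    intro a ha b hb0 hba
    refine ⟨hb0, ?_, ?_⟩
    · exact NFDAux.lpt_mem_of_between hconv h0' ha.2.1 hb0 hba
    · exact NFDAux.lpt_mem_of_between hconv ha.2.2 h0' (by linarith) (by linarith)
  set α : ℝ := min 1 (sSup A) with hαdef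
  have hαA : α ∈ A := by
    rcases le_total (sSup A) 1 with h | h
    · rw [hαdef, min_eq_right h]; exact hsupA
    · rw [hαdef, min_eq_left h]
      exact hdc _ hsupA 1 zero_le_one h
  have hαpos : 0 < α :=
    lt_min one_pos (lt_of_lt_of_le hδpos (le_csSup hbdd hδA))
  have hα1 : α ≤ 1 := min_le_left _ _
  have hmα : NFDAux.lpt v α ∈ Box := hαA.2.1
  have hmmα : NFDAux.lpt v (-α) ∈ Box := hαA.2.2
  -- the per-index bounds
  set P : Fin n → Prop := fun i => f i 0 < 1 ∨ ¬ AffineOnLine d Box v (f i) with hP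
  have hperi : ∀ i : Fin n,
      f i (NFDAux.lpt v α) + f i (NFDAux.lpt v (-α)) ≤ 2 - α * (if P i then 1 else 0) := by
    intro i
    by_cases hPi : P i
    · rw [if_pos hPi, mul_one]
      exact NFDAux.pair_bound_bad (hicpa i) (hh1 i) h0B hconv (hpos i) hαpos hα1 hmα hmmα hPi
    · rw [if_neg hPi, mul_zero, sub_zero]
      have h1 := NFDAux.pair_concave (v := v) (hicpa i) hmα hmmα
      have h2 := (NFDAux.f_zero_facts (hh1 i) h0B (hpos i)).1
      linarith
  -- summation
  have hlow1 := hge _ hmα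
  have hlow2 := hge _ hmmα
  have hsum : ∑ i : Fin n, (f i (NFDAux.lpt v α) + f i (NFDAux.lpt v (-α)))
      ≤ 2 * (n : ℝ) - α * ((Finset.univ.filter P).card : ℝ) := by
    calc ∑ i : Fin n, (f i (NFDAux.lpt v α) + f i (NFDAux.lpt v (-α)))
        ≤ ∑ i : Fin n, (2 - α * (if P i then 1 else 0)) := Finset.sum_le_sum fun i _ => hperi i
      _ = 2 * (n : ℝ) - α * ((Finset.univ.filter P).card : ℝ) := by
          rw [Finset.sum_sub_distrib, ← Finset.mul_sum, Finset.sum_boole]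
          simp [mul_comm]
  have hsum2 : 2 * (n : ℝ) - 4 ≤ ∑ i : Fin n, (f i (NFDAux.lpt v α) + f i (NFDAux.lpt v (-α))) := by
    rw [Finset.sum_add_distrib]
    linarith
  have hkα : α * ((Finset.univ.filter P).card : ℝ) ≤ 4 := by linarith
  have hcard : ({i : Fin n | f i 0 < 1 ∨ ¬ AffineOnLine d Box v (f i)}.ncard : ℝ)
      = ((Finset.univ.filter P).card : ℝ) := by
    congr 1
    rw [Set.ncard_eq_toFinset_card', Set.toFinset_setOf]
  rw [hcard, hAeq, le_div_iff₀ hαpos]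
  linarith

end
end

section
/- Let d be a positive integer, let Box ⊆ ℝ^d be a full-dimensional lattice polytope with 0 in its interior, and let f be an integral concave piecewise-affine function on Box which is at height one and satisfies f(0) = 1. Then f is affine along the segment from the origin to any point of Box: for every v ∈ Box and every t ∈ [0,1], f(t·v) = (1 − t)·f(0) + t·f(v). -/
open scoped BigOperators

noncomputable section

open Topology Filter in
set_option maxHeartbeats 1600000 in
/-- If `f` is an integral concave piecewise-affine function at height one with `f 0 = 1`,
then `f` is affine along the segment from the origin to any point of `Box`. -/
theorem linear_along_segments_from_origin
    (d : ℕ) (hd : 0 < d) (Box : Set (Fin d → ℝ)) (hlat : IsLatticePolytope d Box)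
    (h0 : (0 : Fin d → ℝ) ∈ interior Box)
    (f : (Fin d → ℝ) → ℝ) (hicpa : IsICPA d Box f) (hht : AtHeightOne d Box f)
    (hf0 : f 0 = 1) :
    ∀ v ∈ Box, ∀ t : ℝ, 0 ≤ t → t ≤ 1 →
      f (fun i => t * v i) = (1 - t) * f 0 + t * f v := by
  obtain ⟨S, hproj, hgr⟩ := hicpa
  set K : Set ((Fin d → ℝ) × ℝ) :=
    convexHull ℝ (latticeEmbed d '' (S : Set ((Fin d → ℤ) × ℤ))) with hKdef
  intro v hv t ht0 ht1
  have h0B : (0 : Fin d → ℝ) ∈ Box := interior_subset h0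
  have hBoxconv : Convex ℝ Box := by
    rw [← hproj]
    have := (convex_convexHull ℝ (latticeEmbed d '' (S : Set ((Fin d → ℤ) × ℤ)))).linear_image
      (LinearMap.fst ℝ (Fin d → ℝ) ℝ)
    simpa using this
  have hmem : ∀ τ : ℝ, 0 ≤ τ → τ ≤ 1 → (fun i => τ * v i) ∈ Box := by
    intro τ hτ0 hτ1
    have h := hBoxconv h0B hv (by linarith : (0:ℝ) ≤ 1 - τ) hτ0 (by ring)
    have e : (fun i => τ * v i) = (1 - τ) • (0 : Fin d → ℝ) + τ • v := by
      funext i; simp [smul_eq_mul]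
    rw [e]; exact h
  have hzeroeq : (fun i => (0:ℝ) * v i) = (0 : Fin d → ℝ) := by funext i; simp
  have honeeq : (fun i => (1:ℝ) * v i) = v := by funext i; simp
  -- concavity along the segment
  have hconc : ∀ p q θ : ℝ, 0 ≤ p → p ≤ 1 → 0 ≤ q → q ≤ 1 → 0 ≤ θ → θ ≤ 1 →
      θ * f (fun i => p * v i) + (1 - θ) * f (fun i => q * v i)
        ≤ f (fun i => (θ * p + (1 - θ) * q) * v i) := by
    intro p q θ hp0 hp1 hq0 hq1 hθ0 hθ1
    have hpB := hmem p hp0 hp1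
    have hqB := hmem q hq0 hq1
    have hP : (((fun i => p * v i) : Fin d → ℝ), f (fun i => p * v i)) ∈ K := (hgr _ hpB).1
    have hQ : (((fun i => q * v i) : Fin d → ℝ), f (fun i => q * v i)) ∈ K := (hgr _ hqB).1
    have hR := (convex_convexHull ℝ (latticeEmbed d '' (S : Set ((Fin d → ℤ) × ℤ))))
      hP hQ hθ0 (by linarith : (0:ℝ) ≤ 1 - θ) (by ring)
    have heq : θ • (((fun i => p * v i) : Fin d → ℝ), f (fun i => p * v i))
        + (1 - θ) • (((fun i => q * v i) : Fin d → ℝ), f (fun i => q * v i))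
        = (((fun i => (θ * p + (1 - θ) * q) * v i) : Fin d → ℝ),
           θ * f (fun i => p * v i) + (1 - θ) * f (fun i => q * v i)) := by
      rw [Prod.smul_mk, Prod.smul_mk, Prod.mk_add_mk]
      refine congrArg₂ Prod.mk ?_ ?_
      · funext i; simp [smul_eq_mul]; ring
      · simp [smul_eq_mul]
    rw [heq] at hR
    exact (hgr _ (hmem _ (by nlinarith) (by nlinarith))).2 hR
  have hdotscale : ∀ (τ : ℝ) (u : Fin d → ℤ),
      dotZ d (fun i => τ * v i) u = τ * dotZ d v u := by
    intro τ u; simp [dotZ, Finset.mul_sum, mul_assoc]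
  have hdot0 : ∀ u : Fin d → ℤ, dotZ d (0 : Fin d → ℝ) u = 0 := by
    intro u; simp [dotZ]
  -- key claim: at any interior parameter there is a supporting slope
  have hkey : ∀ t₁ : ℝ, 0 < t₁ → t₁ < 1 → ∃ α : ℝ,
      f (fun i => t₁ * v i) = 1 - t₁ * α ∧
      ∀ τ : ℝ, 0 ≤ τ → τ ≤ 1 → f (fun i => τ * v i) ≤ 1 - τ * α := by
    intro t₁ h1 h2
    obtain ⟨u, m, habs, hle⟩ := hht _ (hmem t₁ h1.le h2.le)
    set a : ℝ := dotZ d v u with ha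
    clear_value a
    set c : ℝ := dotZ d (fun i => t₁ * v i) u + (m : ℝ) * f (fun i => t₁ * v i) with hc
    clear_value c
    have hcval : c = t₁ * a + (m : ℝ) * f (fun i => t₁ * v i) := by
      rw [hc, hdotscale, ← ha]
    have hcabs : c = 1 ∨ c = -1 := (abs_eq (by norm_num)).mp habs
    have hlet : ∀ τ : ℝ, 0 ≤ τ → τ ≤ 1 →
        τ * a + (m : ℝ) * f (fun i => τ * v i) ≤ c := by
      intro τ hτ0 hτ1
      have h := hle _ (hmem τ hτ0 hτ1)
      rwa [hdotscale, ← ha] at h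
    have hle0 : (m : ℝ) ≤ c := by
      have h := hle 0 h0B
      rwa [hdot0, hf0, zero_add, mul_one] at h
    have hlev : a + (m : ℝ) * f v ≤ c := by
      have h := hle v hv
      rwa [← ha] at h
    rcases lt_trichotomy m 0 with hm | hm | hm
    · -- m < 0
      have hmR : (m : ℝ) ≤ -1 := by
        have : m ≤ -1 := by omega
        exact_mod_cast this
      have he : (1 - t₁) * 0 + (1 - (1 - t₁)) * 1 = t₁ := by ring
      have hc01 := hconc 0 1 (1 - t₁) le_rfl zero_le_one zero_le_one le_rfl
        (by linarith) (by linarith)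
      rw [he, hzeroeq, honeeq, hf0] at hc01
      -- hc01 : (1 - t₁) * 1 + (1 - (1 - t₁)) * f v ≤ f (fun i => t₁ * v i)
      have hcm : c ≤ (m : ℝ) := by
        by_contra hcm
        push_neg at hcm
        nlinarith [mul_le_mul_of_nonpos_left hc01 (by linarith : (m:ℝ) ≤ 0),
          mul_le_mul_of_nonneg_left hlev h1.le,
          mul_pos (by linarith : (0:ℝ) < 1 - t₁) (by linarith : (0:ℝ) < c - (m:ℝ))]
      have hceq : c = -1 := by
        rcases hcabs with h | h
        · exfalso; linarith
        · exact h
      have hmeq : (m : ℝ) = -1 := by linarith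
      rw [hmeq] at hcval hlev
      rw [hceq] at hcval hlev
      have hft : f (fun i => t₁ * v i) = 1 + t₁ * a := by linarith
      have hfv : 1 + a ≤ f v := by linarith
      refine ⟨-a, ?_, ?_⟩
      · rw [hft]; ring
      · intro τ hτ0 hτ1
        have hgoal : f (fun i => τ * v i) ≤ 1 + τ * a := by
          rcases le_or_gt τ t₁ with hττ | hττ
          · have hτlt1 : τ < 1 := lt_of_le_of_lt hττ h2
            set θ : ℝ := (1 - t₁) / (1 - τ) with hθ
            have hθ0 : 0 < θ := div_pos (by linarith) (by linarith)
            have hθ1 : θ ≤ 1 := (div_le_one (by linarith)).mpr (by linarith)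
            have hθm : θ * (1 - τ) = 1 - t₁ := by
              rw [hθ]; exact div_mul_cancel₀ _ (by linarith)
            have harg : θ * τ + (1 - θ) * 1 = t₁ := by linear_combination (-1 : ℝ) * hθm
            have hcc := hconc τ 1 θ hτ0 hτ1 zero_le_one le_rfl hθ0.le hθ1
            rw [harg, honeeq, hft] at hcc
            have harga : a * (θ * τ) + a * ((1 - θ) * 1) = a * t₁ := by
              linear_combination a * harg
            nlinarith [mul_nonneg (by linarith : (0:ℝ) ≤ 1 - θ)
              (by linarith : (0:ℝ) ≤ f v - (1 + a)), hcc, harga,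
              mul_pos hθ0 hθ0]
          · have hτpos : 0 < τ := lt_trans h1 hττ
            set θ : ℝ := (τ - t₁) / τ with hθ
            have hθ0 : 0 ≤ θ := div_nonneg (by linarith) hτpos.le
            have h1θ : 0 < 1 - θ := by
              have : θ < 1 := (div_lt_one hτpos).mpr (by linarith)
              linarith
            have hθm : θ * τ = τ - t₁ := by
              rw [hθ]; exact div_mul_cancel₀ _ (by linarith)
            have harg : θ * 0 + (1 - θ) * τ = t₁ := by linear_combination (-1 : ℝ) * hθm
            have hcc := hconc 0 τ θ le_rfl zero_le_one hτ0 hτ1 hθ0 (by linarith)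
            rw [harg, hzeroeq, hf0, hft] at hcc
            have harga : a * ((1 - θ) * τ) = a * t₁ := by
              linear_combination a * harg
            nlinarith [hcc, harga, h1θ]
        linarith [hgoal]
    · -- m = 0
      exfalso
      subst hm
      simp only [Int.cast_zero, zero_mul, add_zero] at hcval hlev hle0
      rcases hcabs with h | h
      · -- c = 1 : t₁ * a = 1, a ≤ 1
        rw [h] at hcval hlev
        have hapos : 0 < a := by
          by_contra hna
          push_neg at hna
          nlinarith [mul_nonpos_of_nonneg_of_nonpos h1.le hna]
        nlinarith [mul_lt_mul_of_pos_right h2 hapos]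
      · rw [h] at hle0; norm_num at hle0
    · -- m > 0
      have hmR : (1 : ℝ) ≤ (m : ℝ) := by exact_mod_cast hm
      have hc1 : c = 1 := by
        rcases hcabs with h | h
        · exact h
        · exfalso; linarith
      have hm1 : (m : ℝ) = 1 := by linarith
      rw [hm1, hc1] at hcval
      refine ⟨a, ?_, ?_⟩
      · linarith
      · intro τ hτ0 hτ1
        have h := hlet τ hτ0 hτ1
        rw [hm1, hc1] at h
        linarith
  -- endpoint cases
  by_cases htz : t = 0
  · subst htz; rw [hzeroeq]; ring
  by_cases hto : t = 1
  · subst hto; rw [honeeq]; ring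
  have ht0' : 0 < t := lt_of_le_of_ne ht0 (Ne.symm htz)
  have ht1' : t < 1 := lt_of_le_of_ne ht1 hto
  obtain ⟨α, hα1, hα2⟩ := hkey t ht0' ht1'
  have hsame : ∀ t₂ : ℝ, t < t₂ → t₂ < 1 → f (fun i => t₂ * v i) = 1 - t₂ * α := by
    intro t₂ hta htb
    have ht₂0 : 0 < t₂ := lt_trans ht0' hta
    obtain ⟨β, hβ1, hβ2⟩ := hkey t₂ ht₂0 htb
    have e1 : 1 - t₂ * β ≤ 1 - t₂ * α := by
      rw [← hβ1]; exact hα2 t₂ ht₂0.le htb.le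
    have e2 : 1 - t * α ≤ 1 - t * β := by
      rw [← hα1]; exact hβ2 t ht0 ht1
    have hαβ : α = β := by
      have h1 : α ≤ β := by nlinarith
      have h2 : β ≤ α := by nlinarith
      linarith
    rw [hβ1, hαβ]
  have hKclosed : IsClosed K := by
    have hfin : (latticeEmbed d '' (S : Set ((Fin d → ℤ) × ℤ))).Finite :=
      S.finite_toSet.image _
    exact (hfin.isCompact_convexHull (𝕜 := ℝ)).isClosed
  have hvK : ((v, 1 - α) : (Fin d → ℝ) × ℝ) ∈ K := by
    have hev : ∀ᶠ τ in 𝓝[<] (1:ℝ),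
        (((fun i => τ * v i) : Fin d → ℝ), 1 - τ * α) ∈ K := by
      filter_upwards [Ioo_mem_nhdsLT_of_mem (Set.mem_Ioc.mpr ⟨ht1', le_rfl⟩)] with τ hτ
      have h := hsame τ hτ.1 hτ.2
      rw [← h]
      exact (hgr _ (hmem τ (by linarith [hτ.1]) hτ.2.le)).1
    have hcont : Continuous (fun τ : ℝ =>
        (((fun i => τ * v i) : Fin d → ℝ), 1 - τ * α)) := by
      refine Continuous.prodMk ?_ (by continuity)
      exact continuous_pi fun i => continuous_id.mul continuous_const
    have hten : Filter.Tendsto (fun τ : ℝ =>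
        (((fun i => τ * v i) : Fin d → ℝ), 1 - τ * α)) (𝓝[<] (1:ℝ)) (𝓝 (v, 1 - α)) := by
      have h := hcont.tendsto 1
      rw [show (((fun i => (1:ℝ) * v i) : Fin d → ℝ), 1 - 1 * α) = (v, 1 - α) by
        rw [honeeq]; norm_num] at h
      exact h.mono_left nhdsWithin_le_nhds
    exact hKclosed.mem_of_tendsto hten hev
  have hfv_ge : 1 - α ≤ f v := (hgr v hv).2 hvK
  have hfv_le : f v ≤ 1 - α := by
    have h := hα2 1 zero_le_one le_rfl
    rwa [honeeq, one_mul] at h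
  have hfv : f v = 1 - α := le_antisymm hfv_le hfv_ge
  rw [hα1, hf0, hfv]; ring

end
end
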